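/- arXiv:2312.12363 — 8 statements merged into one kernel-verified Lean document; each statement's English description precedes it below -/
import Mathlib

section
/- Let V and W be finite-dimensional complex vector spaces and let φ₁, φ₂ : V × W → ℂ be bilinear maps. Let V₁ = ker_L(φ₁), W₁ = ker_R(φ₁) be the left and right kernels of φ₁, and suppose V₁ ∩ ker_L(φ₂) = 0 and W₁ ∩ ker_R(φ₂) = 0. Let r₁ = rank φ₁ and s₁ = rank of the restriction of φ₂ to V₁ × W₁. Then there exists t ∈ ℂ, t ≠ 0, such that rank(φ₁ + t·φ₂) ≥ r₁ + s₁. -/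
open Module

/-- Linearly independent functionals on a finite-dimensional space admit a dual family. -/
lemma aux_dual_family {n : ℕ} {W : Type} [AddCommGroup W] [Module ℂ W]
    [FiniteDimensional ℂ W] (f : Fin n → (W →ₗ[ℂ] ℂ)) (hf : LinearIndependent ℂ f) :
    ∃ x : Fin n → W, ∀ i j, f i (x j) = if i = j then 1 else 0 := by
  set L : W →ₗ[ℂ] (Fin n → ℂ) := LinearMap.pi f with hL
  have hsurj : Function.Surjective L := by
    rw [← LinearMap.range_eq_top]
    by_contra h
    obtain ⟨g, hg, hgker⟩ := Submodule.exists_dual_map_eq_bot_of_lt_top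
      (p := LinearMap.range L) (lt_top_iff_ne_top.mpr h) inferInstance
    have hcomp : ∀ w : W, g (L w) = 0 := by
      intro w
      have : g (L w) ∈ (LinearMap.range L).map g :=
        Submodule.mem_map_of_mem (LinearMap.mem_range_self L w)
      rw [hgker] at this
      simpa using this
    have hzero : ∀ w : W, (∑ i, g ((Pi.single i 1 : Fin n → ℂ)) • f i) w = 0 := by
      intro w
      have : L w = ∑ i, (L w i) • (Pi.single i 1 : Fin n → ℂ) := by
        ext j; simp [Finset.sum_apply, Pi.single_apply]
      have h2 := hcomp w
      rw [this, map_sum] at h2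
      simpa [LinearMap.sum_apply, hL, LinearMap.pi_apply, mul_comm] using h2
    have : ∑ i, g ((Pi.single i 1 : Fin n → ℂ)) • f i = 0 := by ext w; exact hzero w
    have hc := linearIndependent_iff'.mp hf Finset.univ _ this
    have : g = 0 := by
      apply LinearMap.ext
      intro v
      have hv : v = ∑ i, v i • (Pi.single i 1 : Fin n → ℂ) := by
        ext j; simp [Finset.sum_apply, Pi.single_apply]
      rw [hv, map_sum]
      simp [hc _ (Finset.mem_univ _)]
    exact hg this
  choose x hx using fun j => hsurj ((Pi.single j 1 : Fin n → ℂ))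
  refine ⟨x, fun i j => ?_⟩
  have := congrFun (hx j) i
  rw [hL] at this
  simp only [LinearMap.pi_apply] at this
  rw [this, Pi.single_apply]

/-- Lemma 2.3 of the paper: for bilinear maps `φ₁ φ₂ : V × W → ℂ` on finite-dimensional
complex vector spaces with `ker_L φ₁ ∩ ker_L φ₂ = 0` and `ker_R φ₁ ∩ ker_R φ₂ = 0`,
there is a nonzero `t` with `rank (φ₁ + t • φ₂) ≥ r₁ + s₁`, where `r₁ = rank φ₁` and
`s₁` is the rank of the restriction of `φ₂` to `ker_L φ₁ × ker_R φ₁`. -/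
theorem stmt0 {V W : Type} [AddCommGroup V] [Module ℂ V] [FiniteDimensional ℂ V]
    [AddCommGroup W] [Module ℂ W] [FiniteDimensional ℂ W]
    (φ₁ φ₂ : V →ₗ[ℂ] W →ₗ[ℂ] ℂ)
    (hV : LinearMap.ker φ₁ ⊓ LinearMap.ker φ₂ = ⊥)
    (hW : LinearMap.ker φ₁.flip ⊓ LinearMap.ker φ₂.flip = ⊥) :
    ∃ t : ℂ, t ≠ 0 ∧
      finrank ℂ (LinearMap.range φ₁) +
        finrank ℂ (LinearMap.range
          (LinearMap.domRestrict₁₂ φ₂ (LinearMap.ker φ₁) (LinearMap.ker φ₁.flip))) ≤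
      finrank ℂ (LinearMap.range (φ₁ + t • φ₂)) := by
  classical
  set V₁ := LinearMap.ker φ₁ with hV₁
  set W₁ := LinearMap.ker φ₁.flip with hW₁
  set ψ := LinearMap.domRestrict₁₂ φ₂ V₁ W₁ with hψ
  set r := finrank ℂ (LinearMap.range φ₁) with hr
  set s := finrank ℂ (LinearMap.range ψ) with hs
  -- dual pairs for φ₁
  obtain ⟨u, x, hux⟩ : ∃ (u : Fin r → V) (x : Fin r → W),
      ∀ i j, φ₁ (u i) (x j) = if i = j then 1 else 0 := by
    let b := Module.finBasis ℂ (LinearMap.range φ₁)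
    have hbi : LinearIndependent ℂ (fun i => ((b i : W →ₗ[ℂ] ℂ))) :=
      b.linearIndependent.map' (LinearMap.range φ₁).subtype (Submodule.ker_subtype _)
    obtain ⟨x, hx⟩ := aux_dual_family _ hbi
    choose u hu using fun i => (b i).2
    exact ⟨u, x, fun i j => by rw [hu i]; exact hx i j⟩
  -- dual pairs for ψ
  obtain ⟨p, y, hpy⟩ : ∃ (p : Fin s → V₁) (y : Fin s → W₁),
      ∀ k l, ψ (p k) (y l) = if k = l then 1 else 0 := by
    let b := Module.finBasis ℂ (LinearMap.range ψ)
    have hbi : LinearIndependent ℂ (fun k => ((b k : W₁ →ₗ[ℂ] ℂ))) :=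
      b.linearIndependent.map' (LinearMap.range ψ).subtype (Submodule.ker_subtype _)
    obtain ⟨y, hy⟩ := aux_dual_family _ hbi
    choose p hp using fun k => (b k).2
    exact ⟨p, y, fun k l => by rw [hp k]; exact hy k l⟩
  have hpy' : ∀ k l, φ₂ (p k : V) (y l : W) = if k = l then 1 else 0 := by
    intro k l; rw [← hpy k l]; rfl
  -- the vector families
  set v : Fin r ⊕ Fin s → V := Sum.elim u (fun k => (p k : V)) with hv
  set w : Fin r ⊕ Fin s → W := Sum.elim x (fun l => (y l : W)) with hw
  -- vanishing of φ₁ on kernels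
  have hker₁ : ∀ (k : Fin s) (z : W), φ₁ (p k : V) z = 0 := by
    intro k z
    have h0 : φ₁ (p k : V) = 0 := LinearMap.mem_ker.mp (p k).2
    simp [h0]
  have hker₂ : ∀ (l : Fin s) (z : V), φ₁ z (y l : W) = 0 := by
    intro l z
    have h0 : φ₁.flip (y l : W) = 0 := LinearMap.mem_ker.mp (y l).2
    have h1 : φ₁.flip (y l : W) z = 0 := by rw [h0]; rfl
    exact h1
  -- block matrices
  set B : Matrix (Fin r) (Fin r) ℂ := Matrix.of fun i j => φ₂ (u i) (x j) with hB
  set C : Matrix (Fin r) (Fin s) ℂ := Matrix.of fun i l => φ₂ (u i) (y l : W) with hC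
  set D : Matrix (Fin s) (Fin r) ℂ := Matrix.of fun k j => φ₂ (p k : V) (x j) with hD
  set N : ℂ → Matrix (Fin r ⊕ Fin s) (Fin r ⊕ Fin s) ℂ :=
    fun t => Matrix.fromBlocks (1 + t • B) (t • C) D 1 with hN
  -- continuity of the determinant
  have hcont : Continuous fun t => (N t).det := by
    apply Continuous.matrix_det
    apply continuous_matrix
    rintro (i | k) (j | l) <;>
      simp only [hN, Matrix.fromBlocks_apply₁₁, Matrix.fromBlocks_apply₁₂,
        Matrix.fromBlocks_apply₂₁, Matrix.fromBlocks_apply₂₂, Matrix.add_apply,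
        Matrix.smul_apply, smul_eq_mul] <;> fun_prop
  have hN0 : (N 0).det = 1 := by
    simp [hN, Matrix.det_fromBlocks_zero₁₂]
  -- find t ≠ 0 with (N t).det ≠ 0
  have hev : ∀ᶠ t in nhds (0 : ℂ), (N t).det ≠ 0 :=
    hcont.continuousAt.eventually_ne (by rw [hN0]; exact one_ne_zero)
  have hev' : ∀ᶠ t in nhdsWithin (0 : ℂ) {(0:ℂ)}ᶜ, (N t).det ≠ 0 ∧ t ≠ 0 :=
    (hev.filter_mono nhdsWithin_le_nhds).and
      (eventually_mem_nhdsWithin.mono fun t ht => ht)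
  obtain ⟨t, hdetN, ht0⟩ := hev'.exists
  refine ⟨t, ht0, ?_⟩
  -- the big matrix
  set M : Matrix (Fin r ⊕ Fin s) (Fin r ⊕ Fin s) ℂ :=
    Matrix.of fun i j => (φ₁ + t • φ₂) (v i) (w j) with hM
  set d : Fin r ⊕ Fin s → ℂ := Sum.elim (fun _ => 1) (fun _ => t) with hd
  have hMeq : M = Matrix.diagonal d * N t := by
    ext i j
    rw [Matrix.diagonal_mul]
    rcases i with i | k <;> rcases j with j | l <;>
      simp [hM, hN, hd, hv, hw, hB, hC, hD, hux, hker₁, hker₂, hpy',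
        Matrix.one_apply, mul_comm, mul_add]
  have hdet : M.det ≠ 0 := by
    rw [hMeq, Matrix.det_mul, Matrix.det_diagonal]
    refine mul_ne_zero (Finset.prod_ne_zero_iff.mpr fun i _ => ?_) hdetN
    rcases i with i | k <;> simp [hd, ht0]
  -- linear independence of the functionals
  set F := φ₁ + t • φ₂ with hF
  have hli : LinearIndependent ℂ fun i => F (v i) := by
    rw [Fintype.linearIndependent_iff]
    intro c hc i
    have hvm : Matrix.vecMul c M = 0 := by
      funext j
      have := congrArg (fun f => f (w j)) hc
      simpa [Matrix.vecMul, dotProduct, hM, LinearMap.sum_apply,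
        smul_eq_mul] using this
    have : IsUnit M.det := isUnit_iff_ne_zero.mpr hdet
    letI := M.invertibleOfIsUnitDet this
    have hc0 : c = 0 := by
      calc c = Matrix.vecMul c (M * ⅟M) := by rw [mul_invOf_self, Matrix.vecMul_one]
        _ = Matrix.vecMul (Matrix.vecMul c M) ⅟M := by rw [Matrix.vecMul_vecMul]
        _ = 0 := by rw [hvm, Matrix.zero_vecMul]
    exact congrFun hc0 i
  have hli' : LinearIndependent ℂ fun i => (⟨F (v i), LinearMap.mem_range_self F (v i)⟩ :
      LinearMap.range F) :=
    LinearIndependent.of_comp (LinearMap.range F).subtype hli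
  have hcard := hli'.fintype_card_le_finrank
  simpa using hcard
end

section
/- Let V and W be finite-dimensional complex vector spaces and φ₁, φ₂ : V × W → ℂ bilinear maps with ker_L(φ₁) ∩ ker_L(φ₂) = 0 and ker_R(φ₁) ∩ ker_R(φ₂) = 0. Suppose the restriction of φ₂ to ker_L(φ₁) × ker_R(φ₁) has zero left kernel (i.e., its rank s₁ equals dim V − rank φ₁). Let s₂ be the rank of the restriction of φ₁ to ker_L(φ₂) × ker_R(φ₂). Then there are at most dim V − s₁ − s₂ nonzero values of t ∈ ℂ for which rank(φ₁ + t·φ₂) < dim V. -/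
open Module

set_option maxHeartbeats 1000000

lemma aux_natDegree_det_le {ι : Type} [Fintype ι] [DecidableEq ι]
    (M : Matrix ι ι (Polynomial ℂ)) (d : ι → ℕ) (h : ∀ i j, (M i j).natDegree ≤ d i) :
    M.det.natDegree ≤ ∑ i, d i := by
  rw [Matrix.det_apply']
  refine Polynomial.natDegree_sum_le_of_forall_le _ _ fun σ _ => ?_
  refine (Polynomial.natDegree_mul_le).trans ?_
  rw [Polynomial.natDegree_intCast, zero_add]
  refine (Polynomial.natDegree_prod_le _ _).trans ?_
  calc ∑ i, (M (σ i) i).natDegree ≤ ∑ i, d (σ i) :=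
        Finset.sum_le_sum fun i _ => h (σ i) i
    _ = ∑ i, d i := Equiv.sum_comp σ d

lemma aux_dual_family_s1 {P Q : Type} [AddCommGroup P] [Module ℂ P]
    [AddCommGroup Q] [Module ℂ Q] [FiniteDimensional ℂ Q]
    {d : ℕ} (b : Basis (Fin d) ℂ P) (ψ : P →ₗ[ℂ] Q →ₗ[ℂ] ℂ)
    (hψ : LinearMap.ker ψ = ⊥) :
    ∃ c : Fin d → Q, ∀ i j, ψ (b i) (c j) = if i = j then 1 else 0 := by
  set L : Q →ₗ[ℂ] (Fin d → ℂ) := LinearMap.pi (fun i => ψ (b i)) with hL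
  have hsurj : Function.Surjective L := by
    rw [← LinearMap.dualMap_injective_iff, ← LinearMap.ker_eq_bot, LinearMap.ker_eq_bot']
    intro g hg
    set y : Fin d → ℂ := fun i => g (Pi.single i 1) with hy
    have hgx : ∀ x : Fin d → ℂ, g x = ∑ i, x i * y i := by
      intro x
      have hx : x = ∑ i, x i • (Pi.single i 1 : Fin d → ℂ) := by
        ext j
        simp [Pi.single_apply]
      calc g x = g (∑ i, x i • (Pi.single i 1 : Fin d → ℂ)) := by rw [← hx]
        _ = ∑ i, x i * y i := by
            rw [map_sum]
            exact Finset.sum_congr rfl fun i _ => by rw [map_smul]; rfl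
    have hv : (∑ i, y i • b i) ∈ LinearMap.ker ψ := by
      rw [LinearMap.mem_ker]
      ext q
      have h0 : g (L q) = 0 := by
        have := congrFun (congrArg (fun (h : Module.Dual ℂ Q) => h.toFun) hg) q
        simpa [LinearMap.dualMap_apply] using congrFun (congrArg DFunLike.coe hg) q
      rw [hgx] at h0
      simp only [map_sum, LinearMap.sum_apply, LinearMap.map_smul, LinearMap.smul_apply,
        LinearMap.zero_apply, smul_eq_mul]
      rw [← h0]
      refine Finset.sum_congr rfl fun i _ => ?_
      have : L q i = ψ (b i) q := rfl
      rw [this, mul_comm]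
    rw [hψ, Submodule.mem_bot] at hv
    have hy0 : ∀ i, y i = 0 := by
      have := Fintype.linearIndependent_iff.mp b.linearIndependent y hv
      exact this
    refine LinearMap.ext fun x => ?_
    rw [hgx]
    simp [hy0]
  choose c hc using fun j => hsurj (Pi.single j 1)
  refine ⟨c, fun i j => ?_⟩
  have : L (c j) i = (Pi.single j 1 : Fin d → ℂ) i := by rw [hc j]
  have h2 : ψ (b i) (c j) = (Pi.single j (1:ℂ) : Fin d → ℂ) i := this
  rw [h2, Pi.single_apply]

/-- Lemma 2.4 of the paper: if moreover the restriction of `φ₂` to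
`ker_L φ₁ × ker_R φ₁` has zero left kernel, then there are at most
`dim V - s₁ - s₂` nonzero values of `t` for which `rank (φ₁ + t • φ₂) < dim V`. -/
theorem stmt1 {V W : Type} [AddCommGroup V] [Module ℂ V] [FiniteDimensional ℂ V]
    [AddCommGroup W] [Module ℂ W] [FiniteDimensional ℂ W]
    (φ₁ φ₂ : V →ₗ[ℂ] W →ₗ[ℂ] ℂ)
    (hV : LinearMap.ker φ₁ ⊓ LinearMap.ker φ₂ = ⊥)
    (hW : LinearMap.ker φ₁.flip ⊓ LinearMap.ker φ₂.flip = ⊥)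
    (hs₁ : LinearMap.ker
      (LinearMap.domRestrict₁₂ φ₂ (LinearMap.ker φ₁) (LinearMap.ker φ₁.flip)) = ⊥) :
    {t : ℂ | t ≠ 0 ∧ finrank ℂ (LinearMap.range (φ₁ + t • φ₂)) < finrank ℂ V}.Finite ∧
    {t : ℂ | t ≠ 0 ∧ finrank ℂ (LinearMap.range (φ₁ + t • φ₂)) < finrank ℂ V}.ncard ≤
      finrank ℂ V -
        finrank ℂ (LinearMap.range
          (LinearMap.domRestrict₁₂ φ₂ (LinearMap.ker φ₁) (LinearMap.ker φ₁.flip))) -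
        finrank ℂ (LinearMap.range
          (LinearMap.domRestrict₁₂ φ₁ (LinearMap.ker φ₂) (LinearMap.ker φ₂.flip))) := by
  classical
  set n := finrank ℂ V with hn
  set K₁ := LinearMap.ker φ₁ with hK₁
  set R₁ := LinearMap.ker φ₁.flip with hR₁
  set K₂ := LinearMap.ker φ₂ with hK₂
  obtain ⟨U, hU⟩ := Submodule.exists_isCompl K₁
  obtain ⟨U₂, hU₂⟩ := Submodule.exists_isCompl K₂
  set dU := finrank ℂ U with hdU
  set dK := finrank ℂ K₁ with hdK
  set ℓ := finrank ℂ K₂ with hℓ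
  set r₂ := finrank ℂ U₂ with hr₂
  have hcard1 : dK + dU = n := Submodule.finrank_add_eq_of_isCompl hU
  have hcard2 : ℓ + r₂ = n := Submodule.finrank_add_eq_of_isCompl hU₂
  let bU : Basis (Fin dU) ℂ U := finBasis ℂ U
  let bK : Basis (Fin dK) ℂ K₁ := finBasis ℂ K₁
  let bU₂ : Basis (Fin r₂) ℂ U₂ := finBasis ℂ U₂
  let bK₂ : Basis (Fin ℓ) ℂ K₂ := finBasis ℂ K₂
  set ι := (Fin dK ⊕ Fin dU) with hι
  let e : Basis ι ℂ V := (bK.prod bU).map (Submodule.prodEquivOfIsCompl K₁ U hU)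
  have he₁ : ∀ i, e (Sum.inl i) = (bK i : V) := by
    intro i
    simp only [e, Basis.map_apply, Submodule.coe_prodEquivOfIsCompl']
    rw [Basis.prod_apply_inl_fst, Basis.prod_apply_inl_snd]
    simp
  have he₂ : ∀ i, e (Sum.inr i) = (bU i : V) := by
    intro i
    simp only [e, Basis.map_apply, Submodule.coe_prodEquivOfIsCompl']
    rw [Basis.prod_apply_inr_fst, Basis.prod_apply_inr_snd]
    simp
  -- dual families
  obtain ⟨w', hw'⟩ := aux_dual_family_s1 bK
    (LinearMap.domRestrict₁₂ φ₂ K₁ R₁) hs₁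
  have hψU : LinearMap.ker (φ₁.domRestrict U) = ⊥ := by
    rw [LinearMap.ker_eq_bot']
    intro u hu
    have h1 : (u : V) ∈ K₁ := by
      rw [hK₁, LinearMap.mem_ker]
      exact hu
    have h2 := hU.disjoint.symm
    have : (u : V) = 0 := by
      have := Submodule.disjoint_def.mp h2 u u.2 h1
      exact this
    exact Subtype.ext this
  obtain ⟨w, hw⟩ := aux_dual_family_s1 bU (φ₁.domRestrict U) hψU
  set c : ι → W := Sum.elim (fun j => (w' j : W)) w with hc
  set A : Matrix ι ι ℂ := Matrix.of fun i j => φ₁ (e i) (c j) with hA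
  set B : Matrix ι ι ℂ := Matrix.of fun i j => φ₂ (e i) (c j) with hB
  set M : Matrix ι ι (Polynomial ℂ) :=
    Matrix.of fun i j => Polynomial.C (A i j) + Polynomial.X * Polynomial.C (B i j) with hM
  set p := M.det with hp
  -- basic vanishing facts
  have hA_inl : ∀ i j, A (Sum.inl i) j = 0 := by
    intro i j
    have : φ₁ (bK i : V) = 0 := (bK i).2
    simp [hA, he₁, this]
  have hA_c_inl : ∀ (v : V) (j), φ₁ v (c (Sum.inl j)) = 0 := by
    intro v j
    have h0 : φ₁.flip (w' j : W) = 0 := (w' j).2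
    have : φ₁ v (w' j : W) = φ₁.flip (w' j : W) v := rfl
    simp [hc, this, h0]
  have hA_inr_inr : ∀ i j, A (Sum.inr i) (Sum.inr j) = if i = j then 1 else 0 := by
    intro i j
    have := hw i j
    simpa [hA, he₂, hc] using this
  have hB_inl_inl : ∀ i j, B (Sum.inl i) (Sum.inl j) = if i = j then 1 else 0 := by
    intro i j
    have := hw' i j
    simpa [hB, he₁, hc, LinearMap.domRestrict₁₂_apply] using this
  -- evaluation of p
  have hevalp : ∀ t : ℂ, p.eval t =
      (Matrix.of fun i j => A i j + t * B i j).det := by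
    intro t
    rw [hp, ← Polynomial.coe_evalRingHom, RingHom.map_det]
    congr 1
    ext i j
    simp [hM]
    ring
  -- bad t gives root of p
  have hroot : ∀ t : ℂ, finrank ℂ (LinearMap.range (φ₁ + t • φ₂)) < n → p.eval t = 0 := by
    intro t hrank
    set Φ := φ₁ + t • φ₂ with hΦ
    have hker : LinearMap.ker Φ ≠ ⊥ := by
      intro hbot
      have := LinearMap.finrank_range_add_finrank_ker Φ
      rw [hbot, finrank_bot] at this
      omega
    obtain ⟨v, hv, hvne⟩ := (Submodule.ne_bot_iff _).mp hker
    set x : ι → ℂ := fun i => e.repr v i with hx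
    have hxne : x ≠ 0 := by
      intro h0
      apply hvne
      have : e.repr v = 0 := by
        ext i
        exact congrFun h0 i
      simpa using congrArg e.repr.symm this
    have hvec : Matrix.vecMul x (Matrix.of fun i j => A i j + t * B i j) = 0 := by
      ext j
      simp only [Matrix.vecMul, dotProduct, Pi.zero_apply]
      have hΦv : Φ v = 0 := LinearMap.mem_ker.mp hv
      have hcomb : ∑ i, x i • e i = v := e.sum_repr v
      calc ∑ i, x i * (Matrix.of fun i j => A i j + t * B i j) i j
          = ∑ i, x i * (Φ (e i) (c j)) := by
            refine Finset.sum_congr rfl fun i _ => ?_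
            simp [hA, hB, hΦ, mul_add, mul_comm, mul_left_comm]
        _ = Φ (∑ i, x i • e i) (c j) := by
            rw [map_sum, LinearMap.sum_apply]
            exact Finset.sum_congr rfl fun i _ => by
              rw [map_smul, LinearMap.smul_apply, smul_eq_mul]
        _ = 0 := by rw [hcomb, hΦv, LinearMap.zero_apply]
    have hdet : (Matrix.of fun i j => A i j + t * B i j).det = 0 :=
      Matrix.exists_vecMul_eq_zero_iff.mp ⟨x, hxne, hvec⟩
    rw [hevalp t, hdet]
  -- factorization p = X^dK * q
  set M' : Matrix ι ι (Polynomial ℂ) :=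
    Matrix.of fun i j => Sum.elim (fun i' => Polynomial.C (B (Sum.inl i') j))
      (fun i' => M (Sum.inr i') j) i with hM'
  have hfac : M = Matrix.of fun i j =>
      (Sum.elim (fun _ => Polynomial.X) (fun _ => (1 : Polynomial ℂ)) i) * M' i j := by
    ext i j
    cases i with
    | inl i' => simp [hM, hM', hA_inl]
    | inr i' => simp [hM']
  set q := M'.det with hq
  have hpq : p = Polynomial.X ^ dK * q := by
    rw [hp, hfac, Matrix.det_mul_column]
    congr 1
    rw [Fintype.prod_sum_type]
    simp
  have hq0 : q.eval 0 = 1 := by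
    have : q.eval 0 = (M'.map (Polynomial.evalRingHom 0)).det := by
      rw [hq, ← Polynomial.coe_evalRingHom, RingHom.map_det, RingHom.mapMatrix_apply]
    rw [this]
    have hblocks : M'.map (Polynomial.evalRingHom 0) =
        Matrix.fromBlocks 1 (Matrix.of fun i j => B (Sum.inl i) (Sum.inr j)) 0 1 := by
      ext i j
      cases i with
      | inl i' =>
        cases j with
        | inl j' => simp [hM', hB_inl_inl, Matrix.one_apply, apply_ite (Polynomial.eval (0:ℂ))]
        | inr j' => simp [hM']
      | inr i' =>
        cases j with
        | inl j' =>
          simp [hM', hM, hA, hA_c_inl (e (Sum.inr i')) j']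
        | inr j' =>
          simp [hM', hM, hA_inr_inr, Matrix.one_apply, apply_ite (Polynomial.eval (0:ℂ)),
            hA_c_inl]
    rw [hblocks, Matrix.det_fromBlocks_zero₂₁]
    simp
  have hqne : q ≠ 0 := by
    intro h
    rw [h] at hq0
    simp at hq0
  -- second basis adapted to ker φ₂
  have hcardι : Fintype.card ι = n := by
    simp [hι]
    omega
  let f0 : Basis (Fin ℓ ⊕ Fin r₂) ℂ V :=
    (bK₂.prod bU₂).map (Submodule.prodEquivOfIsCompl K₂ U₂ hU₂)
  have hcard3 : Fintype.card ι = Fintype.card (Fin ℓ ⊕ Fin r₂) := by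
    simp [hcardι]
    omega
  set σ : ι ≃ (Fin ℓ ⊕ Fin r₂) := Fintype.equivOfCardEq hcard3 with hσ
  set f : Basis ι ℂ V := f0.reindex σ.symm with hf
  have hff : ∀ i, f i = f0 (σ i) := by
    intro i
    rw [hf, Basis.reindex_apply, Equiv.symm_symm]
  set M'' : Matrix ι ι (Polynomial ℂ) :=
    Matrix.of fun i j => Polynomial.C (φ₁ (f i) (c j)) +
      Polynomial.X * Polynomial.C (φ₂ (f i) (c j)) with hM''
  set T : Matrix ι ι ℂ := Matrix.of fun i j => f.repr (e i) j with hT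
  have hMT : M = (T.map Polynomial.C) * M'' := by
    refine Matrix.ext fun i j => ?_
    rw [Matrix.mul_apply]
    have he' : e i = ∑ k, T i k • f k := (f.sum_repr (e i)).symm
    have h1 : φ₁ (e i) (c j) = ∑ k, T i k * φ₁ (f k) (c j) := by
      rw [he', map_sum, LinearMap.sum_apply]
      exact Finset.sum_congr rfl fun k _ => by
        rw [map_smul, LinearMap.smul_apply, smul_eq_mul]
    have h2 : φ₂ (e i) (c j) = ∑ k, T i k * φ₂ (f k) (c j) := by
      rw [he', map_sum, LinearMap.sum_apply]
      exact Finset.sum_congr rfl fun k _ => by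
        rw [map_smul, LinearMap.smul_apply, smul_eq_mul]
    rw [hM]
    simp only [hA, hB, Matrix.of_apply, h1, h2, map_sum, Finset.mul_sum,
      ← Finset.sum_add_distrib]
    apply Finset.sum_congr rfl
    intro k _
    simp only [hM'', hT, Matrix.map_apply, Matrix.of_apply, map_mul]
    ring
  have hdeg'' : M''.det.natDegree ≤ r₂ := by
    have := aux_natDegree_det_le M''
      (fun i => Sum.elim (fun _ => 0) (fun _ => 1) (σ i)) ?_
    · refine this.trans ?_
      rw [← Equiv.sum_comp σ.symm (fun i => Sum.elim (fun _ => (0:ℕ)) (fun _ => 1) (σ i))]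
      simp only [Equiv.apply_symm_apply]
      rw [Fintype.sum_sum_type]
      simp
    · intro i j
      cases hσi : σ i with
      | inl i' =>
        have hf2 : φ₂ (f i) = 0 := by
          rw [hff i, hσi]
          have : f0 (Sum.inl i') = (bK₂ i' : V) := by
            simp [f0, Basis.map_apply, Basis.prod_apply]
          rw [this]
          exact (bK₂ i').2
        simp only [hσi, Sum.elim_inl]
        simp [hM'', hf2]
      | inr i' =>
        simp only [hσi, Sum.elim_inr, hM'', Matrix.of_apply]
        refine (Polynomial.natDegree_add_le _ _).trans ?_
        simp only [Polynomial.natDegree_C, Nat.max_le]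
        constructor
        · omega
        · refine (Polynomial.natDegree_mul_le).trans ?_
          simp [Polynomial.natDegree_X_le]
  have hdegp : p.natDegree ≤ r₂ := by
    rw [hp, hMT, Matrix.det_mul]
    refine (Polynomial.natDegree_mul_le).trans ?_
    have : (T.map Polynomial.C).det = Polynomial.C T.det := by
      rw [RingHom.map_det, RingHom.mapMatrix_apply]
    rw [this, Polynomial.natDegree_C, zero_add]
    exact hdeg''
  have hdegq : dK + q.natDegree ≤ r₂ := by
    have : p.natDegree = dK + q.natDegree := by
      rw [hpq, Polynomial.natDegree_mul (pow_ne_zero _ Polynomial.X_ne_zero) hqne, Polynomial.natDegree_X_pow]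
    omega
  -- s₁ and s₂
  set s₁ := finrank ℂ (LinearMap.range (LinearMap.domRestrict₁₂ φ₂ K₁ R₁)) with hs₁def
  set s₂ := finrank ℂ (LinearMap.range
    (LinearMap.domRestrict₁₂ φ₁ K₂ (LinearMap.ker φ₂.flip))) with hs₂def
  have hs₁eq : s₁ = dK := by
    have := LinearMap.finrank_range_add_finrank_ker (LinearMap.domRestrict₁₂ φ₂ K₁ R₁)
    rw [hs₁] at this
    rw [finrank_bot] at this
    omega
  have hs₂le : s₂ ≤ ℓ := LinearMap.finrank_range_le _
  -- conclusion
  have hsub : {t : ℂ | t ≠ 0 ∧ finrank ℂ (LinearMap.range (φ₁ + t • φ₂)) < n} ⊆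
      {t : ℂ | q.IsRoot t} := by
    intro t ⟨ht0, htr⟩
    have hp0 : p.eval t = 0 := hroot t htr
    rw [hpq] at hp0
    simp only [Polynomial.eval_mul, Polynomial.eval_pow, Polynomial.eval_X] at hp0
    have : q.eval t = 0 := by
      rcases mul_eq_zero.mp hp0 with h | h
      · exact absurd (pow_eq_zero_iff'.mp h).1 ht0
      · exact h
    exact this
  have hfin : {t : ℂ | q.IsRoot t}.Finite := Polynomial.finite_setOf_isRoot hqne
  constructor
  · exact hfin.subset hsub
  · have h1 : {t : ℂ | t ≠ 0 ∧ finrank ℂ (LinearMap.range (φ₁ + t • φ₂)) < n}.ncard ≤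
        {t : ℂ | q.IsRoot t}.ncard := Set.ncard_le_ncard hsub hfin
    have h2 : {t : ℂ | q.IsRoot t}.ncard ≤ q.natDegree := by
      have hset : {t : ℂ | q.IsRoot t} = ↑q.roots.toFinset := by
        ext x
        simp [Polynomial.mem_roots, hqne]
      rw [hset, Set.ncard_coe_finset]
      exact (Multiset.toFinset_card_le _).trans (q.card_roots')
    omega
end

section
/- Let V and W be finite-dimensional complex vector spaces and φ₁, φ₂ : V × W → ℂ bilinear maps. Set Vᵢ = ker_L(φᵢ), Wᵢ = ker_R(φᵢ), and assume V₁ ∩ V₂ = 0 and W₁ ∩ W₂ = 0. Let rᵢ = rank φᵢ. Then for {i,j} = {1,2}, the left kernel of the restriction of φⱼ to Vᵢ × Wᵢ has dimension at most r₁ + r₂ − dim W. -/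
open Module

section Helpers
open LinearMap Submodule

private lemma rank_flip' {M N : Type} [AddCommGroup M] [Module ℂ M] [FiniteDimensional ℂ M]
    [AddCommGroup N] [Module ℂ N] [FiniteDimensional ℂ N] (B : M →ₗ[ℂ] N →ₗ[ℂ] ℂ) :
    finrank ℂ (range B.flip) = finrank ℂ (range B) := by
  have h : B.flip = B.dualMap.comp (Dual.eval ℂ N) := by ext n m; rfl
  have hev : range (Dual.eval ℂ N) = ⊤ := by
    rw [← Module.evalEquiv_toLinearMap]; exact LinearEquiv.range _
  rw [h, range_comp, hev, Submodule.map_top,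
    LinearMap.finrank_range_dualMap_eq_finrank_range]

private lemma aux {V W : Type} [AddCommGroup V] [Module ℂ V] [FiniteDimensional ℂ V]
    [AddCommGroup W] [Module ℂ W] [FiniteDimensional ℂ W]
    (φ₁ φ₂ : V →ₗ[ℂ] W →ₗ[ℂ] ℂ)
    (hV : LinearMap.ker φ₁ ⊓ LinearMap.ker φ₂ = ⊥)
    (hW : LinearMap.ker φ₁.flip ⊓ LinearMap.ker φ₂.flip = ⊥) :
    finrank ℂ (LinearMap.ker
        (LinearMap.domRestrict₁₂ φ₂ (LinearMap.ker φ₁) (LinearMap.ker φ₁.flip))) ≤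
      finrank ℂ (LinearMap.range φ₁) + finrank ℂ (LinearMap.range φ₂) - finrank ℂ W := by
  set V₁ := LinearMap.ker φ₁ with hV₁
  set W₁ := LinearMap.ker φ₁.flip with hW₁
  set L : V →ₗ[ℂ] (W₁ →ₗ[ℂ] ℂ) := φ₂.compl₂ W₁.subtype with hL
  -- the kernel of the restricted map has the same dimension as ker L ⊓ V₁
  have hS : Submodule.map V₁.subtype
      (LinearMap.ker (LinearMap.domRestrict₁₂ φ₂ V₁ W₁)) = LinearMap.ker L ⊓ V₁ := by
    ext x
    simp only [Submodule.mem_map, LinearMap.mem_ker, Submodule.mem_inf]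
    constructor
    · rintro ⟨⟨y, hy⟩, h, rfl⟩
      refine ⟨?_, hy⟩
      ext w
      exact congrFun (congrArg DFunLike.coe h) w
    · rintro ⟨h1, h2⟩
      refine ⟨⟨x, h2⟩, ?_, rfl⟩
      ext w
      exact congrFun (congrArg DFunLike.coe h1) w
  have hdimK : finrank ℂ (LinearMap.ker (LinearMap.domRestrict₁₂ φ₂ V₁ W₁))
      = finrank ℂ (LinearMap.ker L ⊓ V₁ : Submodule ℂ V) := by
    rw [← hS]
    exact (Submodule.equivMapOfInjective V₁.subtype (Submodule.injective_subtype V₁) _).finrank_eq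
  -- L.flip is injective
  have hLflip : L.flip = φ₂.flip ∘ₗ W₁.subtype := by ext w v; rfl
  have hkerflip : LinearMap.ker L.flip = ⊥ := by
    rw [Submodule.eq_bot_iff]
    intro w hw
    rw [LinearMap.mem_ker, hLflip] at hw
    have : (w : W) ∈ W₁ ⊓ LinearMap.ker φ₂.flip := ⟨w.2, hw⟩
    rw [hW] at this
    exact Subtype.ext this
  -- rank of L equals dim W₁
  have hrankL : finrank ℂ (LinearMap.range L) = finrank ℂ W₁ := by
    rw [← rank_flip' L]
    have := LinearMap.finrank_range_add_finrank_ker L.flip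
    rw [hkerflip, finrank_bot] at this
    omega
  -- ker φ₂ ≤ ker L
  have hV₂L : LinearMap.ker φ₂ ≤ LinearMap.ker L := by
    intro v hv
    rw [LinearMap.mem_ker] at hv ⊢
    ext w
    simp [hL, hv]
  -- dimension count
  have hsum := Submodule.finrank_sup_add_finrank_inf_eq
    (LinearMap.ker L ⊓ V₁) (LinearMap.ker φ₂)
  have hinf : (LinearMap.ker L ⊓ V₁) ⊓ LinearMap.ker φ₂ = ⊥ := by
    rw [eq_bot_iff, ← hV]
    exact le_trans (inf_le_inf_right _ inf_le_right) le_rfl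
  rw [hinf, finrank_bot] at hsum
  have hle : finrank ℂ ((LinearMap.ker L ⊓ V₁) ⊔ LinearMap.ker φ₂ : Submodule ℂ V)
      ≤ finrank ℂ (LinearMap.ker L) :=
    Submodule.finrank_mono (sup_le (le_trans inf_le_left le_rfl) hV₂L)
  have hnl := LinearMap.finrank_range_add_finrank_ker L
  have hw1 : finrank ℂ W₁ + finrank ℂ (LinearMap.range φ₁.flip) = finrank ℂ W := by
    have h := LinearMap.finrank_range_add_finrank_ker φ₁.flip
    have h0 : finrank ℂ W₁ = finrank ℂ (LinearMap.ker φ₁.flip) := rfl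
    omega
  have hr1 : finrank ℂ (LinearMap.range φ₁.flip) = finrank ℂ (LinearMap.range φ₁) :=
    rank_flip' φ₁
  have hv2 := LinearMap.finrank_range_add_finrank_ker φ₂
  have hWW : finrank ℂ W₁ = finrank ℂ (LinearMap.ker φ₁.flip) := rfl
  rw [hdimK]
  rw [hrankL, hWW] at hnl
  rw [hWW, hr1] at hw1
  omega

end Helpers

/-- Lemma 2.6 of the paper: with `V₁ ∩ V₂ = 0` and `W₁ ∩ W₂ = 0`, for `{i,j} = {1,2}`
the left kernel of the restriction of `φⱼ` to `Vᵢ × Wᵢ` has dimension at most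
`r₁ + r₂ - dim W`. -/
theorem stmt2 {V W : Type} [AddCommGroup V] [Module ℂ V] [FiniteDimensional ℂ V]
    [AddCommGroup W] [Module ℂ W] [FiniteDimensional ℂ W]
    (φ₁ φ₂ : V →ₗ[ℂ] W →ₗ[ℂ] ℂ)
    (hV : LinearMap.ker φ₁ ⊓ LinearMap.ker φ₂ = ⊥)
    (hW : LinearMap.ker φ₁.flip ⊓ LinearMap.ker φ₂.flip = ⊥) :
    finrank ℂ (LinearMap.ker
        (LinearMap.domRestrict₁₂ φ₂ (LinearMap.ker φ₁) (LinearMap.ker φ₁.flip))) ≤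
      finrank ℂ (LinearMap.range φ₁) + finrank ℂ (LinearMap.range φ₂) - finrank ℂ W ∧
    finrank ℂ (LinearMap.ker
        (LinearMap.domRestrict₁₂ φ₁ (LinearMap.ker φ₂) (LinearMap.ker φ₂.flip))) ≤
      finrank ℂ (LinearMap.range φ₁) + finrank ℂ (LinearMap.range φ₂) - finrank ℂ W := by
  constructor
  · exact aux φ₁ φ₂ hV hW
  · have h := aux φ₂ φ₁ (by rwa [inf_comm]) (by rwa [inf_comm])
    omega
end

section
/- Let S = ℂ[x₀,…,xₙ] and let I ⊆ S be a homogeneous ideal such that A = S/I is a graded Artinian Gorenstein algebra of socle degree t (i.e., A_t ≅ ℂ, A_s = 0 for s > t, and the multiplication pairings A_e × A_{t−e} → A_t ≅ ℂ are perfect for all 0 ≤ e ≤ t). Let J ⊆ S be a homogeneous ideal and let 0 ≤ α ≤ t − 1 be an integer. If the left kernel of the multiplication pairing μ_α : ((J+I)/I)_α × ((J+I)/I)_{t−α} → A_t is nonzero, then the left kernel of μ_{α+1} : ((J+I)/I)_{α+1} × ((J+I)/I)_{t−α−1} → A_t is also nonzero. -/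
open MvPolynomial Module

/-- The degree-`e` graded piece of `S ⧸ K`, realized as the image of the homogeneous
degree-`e` polynomials in the quotient. -/
noncomputable def qpiece {n : ℕ} (K : Ideal (MvPolynomial (Fin n) ℂ)) (e : ℕ) :
    Submodule ℂ (MvPolynomial (Fin n) ℂ ⧸ K) :=
  (MvPolynomial.homogeneousSubmodule (Fin n) ℂ e).map (Ideal.Quotient.mkₐ ℂ K).toLinearMap

/-- The degree-`e` piece of the image `(J+I)/I` of an ideal `J` in `S ⧸ I`. -/
noncomputable def bpiece {n : ℕ} (I J : Ideal (MvPolynomial (Fin n) ℂ)) (e : ℕ) :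
    Submodule ℂ (MvPolynomial (Fin n) ℂ ⧸ I) :=
  ((Submodule.restrictScalars ℂ (J ⊔ I)) ⊓ MvPolynomial.homogeneousSubmodule (Fin n) ℂ e).map
    (Ideal.Quotient.mkₐ ℂ I).toLinearMap


lemma key_aux {n : ℕ} (I : Ideal (MvPolynomial (Fin (n + 1)) ℂ))
    (a : MvPolynomial (Fin (n + 1)) ℂ ⧸ I)
    (h : ∀ i, a * Ideal.Quotient.mk I (MvPolynomial.X i) = 0)
    (d : ℕ) (p : MvPolynomial (Fin (n + 1)) ℂ) (hp : p.IsHomogeneous (d + 1)) :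
    a * Ideal.Quotient.mk I p = 0 := by
  have hmem : p ∈ Ideal.span (MvPolynomial.X '' (Set.univ : Set (Fin (n + 1))) :
      Set (MvPolynomial (Fin (n + 1)) ℂ)) := by
    rw [MvPolynomial.mem_ideal_span_X_image]
    intro m hm
    have hdeg := hp (MvPolynomial.mem_support_iff.mp hm)
    by_contra hc
    push_neg at hc
    have hm0 : m = 0 := by
      ext i
      exact hc i (Set.mem_univ i)
    rw [hm0] at hdeg
    simp at hdeg
  refine Submodule.span_induction ?_ ?_ ?_ ?_ hmem
  · rintro x ⟨i, -, rfl⟩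
    exact h i
  · simp
  · intro x y _ _ hx hy
    rw [map_add, mul_add, hx, hy, add_zero]
  · intro r x _ hx
    rw [smul_eq_mul, map_mul, mul_comm (Ideal.Quotient.mk I r), ← mul_assoc, hx, zero_mul]

/-- Lemma 2.8 of the paper: let `A = S/I` be a graded Artinian Gorenstein algebra of socle
degree `t` and `J` a homogeneous ideal. If the left kernel of the multiplication pairing
`((J+I)/I)_α × ((J+I)/I)_{t−α} → A_t` is nonzero (for `0 ≤ α ≤ t−1`), then so is the left
kernel of `((J+I)/I)_{α+1} × ((J+I)/I)_{t−α−1} → A_t`. -/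
theorem stmt4 {n t : ℕ} (I J : Ideal (MvPolynomial (Fin (n + 1)) ℂ))
    (hI : ∀ f ∈ I, ∀ e : ℕ, MvPolynomial.homogeneousComponent e f ∈ I)
    (hJ : ∀ f ∈ J, ∀ e : ℕ, MvPolynomial.homogeneousComponent e f ∈ J)
    (hsoc : finrank ℂ (qpiece I t) = 1)
    (hvan : ∀ s : ℕ, t < s → qpiece I s = ⊥)
    (hperfL : ∀ e ≤ t, ∀ a ∈ qpiece I e, a ≠ 0 → ∃ b ∈ qpiece I (t - e), a * b ≠ 0)
    (hperfR : ∀ e ≤ t, ∀ b ∈ qpiece I (t - e), b ≠ 0 → ∃ a ∈ qpiece I e, a * b ≠ 0)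
    (α : ℕ) (hα : α + 1 ≤ t)
    (hker : ∃ f ∈ bpiece I J α, f ≠ 0 ∧ ∀ g ∈ bpiece I J (t - α), f * g = 0) :
    ∃ f ∈ bpiece I J (α + 1), f ≠ 0 ∧ ∀ g ∈ bpiece I J (t - α - 1), f * g = 0 := by
  obtain ⟨f, hf, hf0, hfz⟩ := hker
  obtain ⟨h, ⟨hhJ, hhhom⟩, hfeq⟩ := Submodule.mem_map.mp hf
  have hfeq' : Ideal.Quotient.mk I h = f := hfeq
  have hhJ' : h ∈ J ⊔ I := hhJ
  have hh : h.IsHomogeneous α := hhhom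
  have hfq : f ∈ qpiece I α := Submodule.mem_map.mpr ⟨h, hhhom, hfeq⟩
  obtain ⟨b, hb, hfb⟩ := hperfL α (by omega) f hfq hf0
  obtain ⟨p, hphom, hbeq⟩ := Submodule.mem_map.mp hb
  have hbeq' : Ideal.Quotient.mk I p = b := hbeq
  have hp : p.IsHomogeneous ((t - α - 1) + 1) := by
    have : p.IsHomogeneous (t - α) := hphom
    rwa [show t - α = (t - α - 1) + 1 by omega] at this
  have hex : ∃ i, f * Ideal.Quotient.mk I (MvPolynomial.X i) ≠ 0 := by
    by_contra hc
    push_neg at hc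
    apply hfb
    rw [← hbeq']
    exact key_aux I f hc _ p hp
  obtain ⟨i, hi⟩ := hex
  refine ⟨Ideal.Quotient.mk I (MvPolynomial.X i * h), ?_, ?_, ?_⟩
  · refine Submodule.mem_map.mpr ⟨MvPolynomial.X i * h, ⟨?_, ?_⟩, rfl⟩
    · show MvPolynomial.X i * h ∈ J ⊔ I
      exact Ideal.mul_mem_left _ _ hhJ'
    · show (MvPolynomial.X i * h).IsHomogeneous (α + 1)
      rw [mul_comm]
      exact hh.mul (MvPolynomial.isHomogeneous_X ℂ i)
  · rw [map_mul, mul_comm, hfeq']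
    exact hi
  · intro g hg
    obtain ⟨k, ⟨hkJ, hkhom⟩, hgeq⟩ := Submodule.mem_map.mp hg
    have hkJ' : k ∈ J ⊔ I := hkJ
    have hk : k.IsHomogeneous (t - α - 1) := hkhom
    have hmem : Ideal.Quotient.mk I (MvPolynomial.X i * k) ∈ bpiece I J (t - α) := by
      refine Submodule.mem_map.mpr ⟨MvPolynomial.X i * k, ⟨?_, ?_⟩, rfl⟩
      · show MvPolynomial.X i * k ∈ J ⊔ I
        exact Ideal.mul_mem_left _ _ hkJ'
      · show (MvPolynomial.X i * k).IsHomogeneous (t - α)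
        rw [mul_comm, show t - α = t - α - 1 + 1 from by omega]
        exact hk.mul (MvPolynomial.isHomogeneous_X ℂ i)
    have hz := hfz _ hmem
    have hgeq' : Ideal.Quotient.mk I k = g := hgeq
    rw [← hgeq', ← map_mul, show MvPolynomial.X i * h * k = h * (MvPolynomial.X i * k) by ring,
      map_mul, hfeq']
    exact hz
end

section
/- Let S = ℂ[x₀,…,xₙ], and let I₁, I₂ ⊆ S be homogeneous ideals such that S/I₁ and S/I₂ are graded Artinian Gorenstein algebras of the same socle degree t. Fix isomorphisms σⱼ : (S/Iⱼ)_t → ℂ, and for an integer α define bilinear maps φⱼ : (S/(I₁∩I₂))_α × (S/(I₁∩I₂))_{t−α} → ℂ by φⱼ(f,g) = σⱼ(fg mod Iⱼ). If (S/(I₁+I₂))_{t−α} = 0, then for every nonzero λ ∈ ℂ the left kernel of φ₁ + λ·φ₂ is zero. -/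
open MvPolynomial Module

/-- Lemma 2.7 of the paper: let `S/I₁`, `S/I₂` be graded Artinian Gorenstein algebras of the
same socle degree `t`, with chosen isomorphisms `σⱼ : (S/Iⱼ)_t ≅ ℂ` (encoded as linear
functionals injective on the socle), and let `φⱼ(f,g) = σⱼ(fg mod Iⱼ)` be the induced
pairings on `(S/(I₁∩I₂))_α × (S/(I₁∩I₂))_{t−α}`. If `(S/(I₁+I₂))_{t−α} = 0`, then for every
nonzero `λ` the left kernel of `φ₁ + λ·φ₂` is zero, i.e. any homogeneous `f` of degree `α`
paired trivially with all homogeneous `g` of degree `t−α` lies in `I₁ ∩ I₂`. -/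
theorem stmt5 {n t : ℕ} (I₁ I₂ : Ideal (MvPolynomial (Fin (n + 1)) ℂ))
    (hI₁ : ∀ f ∈ I₁, ∀ e : ℕ, MvPolynomial.homogeneousComponent e f ∈ I₁)
    (hI₂ : ∀ f ∈ I₂, ∀ e : ℕ, MvPolynomial.homogeneousComponent e f ∈ I₂)
    (hsoc₁ : finrank ℂ (qpiece I₁ t) = 1) (hsoc₂ : finrank ℂ (qpiece I₂ t) = 1)
    (hvan₁ : ∀ s : ℕ, t < s → qpiece I₁ s = ⊥) (hvan₂ : ∀ s : ℕ, t < s → qpiece I₂ s = ⊥)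
    (hperf₁L : ∀ e ≤ t, ∀ a ∈ qpiece I₁ e, a ≠ 0 → ∃ b ∈ qpiece I₁ (t - e), a * b ≠ 0)
    (hperf₁R : ∀ e ≤ t, ∀ b ∈ qpiece I₁ (t - e), b ≠ 0 → ∃ a ∈ qpiece I₁ e, a * b ≠ 0)
    (hperf₂L : ∀ e ≤ t, ∀ a ∈ qpiece I₂ e, a ≠ 0 → ∃ b ∈ qpiece I₂ (t - e), a * b ≠ 0)
    (hperf₂R : ∀ e ≤ t, ∀ b ∈ qpiece I₂ (t - e), b ≠ 0 → ∃ a ∈ qpiece I₂ e, a * b ≠ 0)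
    (σ₁ : (MvPolynomial (Fin (n + 1)) ℂ ⧸ I₁) →ₗ[ℂ] ℂ)
    (σ₂ : (MvPolynomial (Fin (n + 1)) ℂ ⧸ I₂) →ₗ[ℂ] ℂ)
    (hσ₁ : ∀ a ∈ qpiece I₁ t, σ₁ a = 0 → a = 0)
    (hσ₂ : ∀ a ∈ qpiece I₂ t, σ₂ a = 0 → a = 0)
    (α : ℕ) (hα : α ≤ t)
    (hvansum : qpiece (I₁ ⊔ I₂) (t - α) = ⊥)
    (lam : ℂ) (hlam : lam ≠ 0) :
    ∀ f ∈ MvPolynomial.homogeneousSubmodule (Fin (n + 1)) ℂ α,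
      (∀ g ∈ MvPolynomial.homogeneousSubmodule (Fin (n + 1)) ℂ (t - α),
        σ₁ (Ideal.Quotient.mk I₁ (f * g)) + lam * σ₂ (Ideal.Quotient.mk I₂ (f * g)) = 0) →
      f ∈ I₁ ⊓ I₂ := by
  intro f hf hpair
  -- Every homogeneous g of degree t-α splits as p + q with p ∈ I₁, q ∈ I₂ homogeneous.
  have split : ∀ g ∈ MvPolynomial.homogeneousSubmodule (Fin (n + 1)) ℂ (t - α),
      ∃ p q, p ∈ I₁ ∧ q ∈ I₂ ∧
        p ∈ MvPolynomial.homogeneousSubmodule (Fin (n + 1)) ℂ (t - α) ∧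
        q ∈ MvPolynomial.homogeneousSubmodule (Fin (n + 1)) ℂ (t - α) ∧ g = p + q := by
    intro g hg
    have hmem : Ideal.Quotient.mk (I₁ ⊔ I₂) g ∈ qpiece (I₁ ⊔ I₂) (t - α) := ⟨g, hg, rfl⟩
    rw [hvansum, Submodule.mem_bot] at hmem
    have hg2 : g ∈ I₁ ⊔ I₂ := Ideal.Quotient.eq_zero_iff_mem.mp hmem
    obtain ⟨p, hp, q, hq, hpq⟩ := Submodule.mem_sup.mp hg2
    refine ⟨MvPolynomial.homogeneousComponent (t - α) p,
      MvPolynomial.homogeneousComponent (t - α) q, hI₁ p hp _, hI₂ q hq _,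
      (MvPolynomial.mem_homogeneousSubmodule _ _).mpr
        (MvPolynomial.homogeneousComponent_isHomogeneous _ _),
      (MvPolynomial.mem_homogeneousSubmodule _ _).mpr
        (MvPolynomial.homogeneousComponent_isHomogeneous _ _), ?_⟩
    have h1 := congrArg (MvPolynomial.homogeneousComponent (t - α)) hpq
    rw [map_add] at h1
    have hgg : MvPolynomial.homogeneousComponent (t - α) g = g := by
      simpa using MvPolynomial.homogeneousComponent_of_mem hg (m := t - α)
    rw [← hgg]
    exact h1.symm
  -- key vanishing
  have key : ∀ g ∈ MvPolynomial.homogeneousSubmodule (Fin (n + 1)) ℂ (t - α),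
      σ₁ (Ideal.Quotient.mk I₁ (f * g)) = 0 ∧ σ₂ (Ideal.Quotient.mk I₂ (f * g)) = 0 := by
    intro g hg
    obtain ⟨p, q, hp1, hq2, hph, hqh, rfl⟩ := split g hg
    have hfp1 : Ideal.Quotient.mk I₁ (f * p) = 0 :=
      Ideal.Quotient.eq_zero_iff_mem.mpr (I₁.mul_mem_left f hp1)
    have hfq2 : Ideal.Quotient.mk I₂ (f * q) = 0 :=
      Ideal.Quotient.eq_zero_iff_mem.mpr (I₂.mul_mem_left f hq2)
    have hq1 : σ₁ (Ideal.Quotient.mk I₁ (f * q)) = 0 := by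
      have := hpair q hqh
      rw [hfq2, map_zero, mul_zero, add_zero] at this
      exact this
    have hp2 : σ₂ (Ideal.Quotient.mk I₂ (f * p)) = 0 := by
      have := hpair p hph
      rw [hfp1, map_zero, zero_add] at this
      exact (mul_eq_zero.mp this).resolve_left hlam
    constructor
    · rw [mul_add, map_add, map_add, hfp1, map_zero, zero_add, hq1]
    · rw [mul_add, map_add, map_add, hfq2, map_zero, add_zero, hp2]
  -- f * g ∈ I_j for all homogeneous g of degree t - α
  have hdeg : α + (t - α) = t := Nat.add_sub_cancel' hα
  have hz₁ : ∀ g ∈ MvPolynomial.homogeneousSubmodule (Fin (n + 1)) ℂ (t - α),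
      Ideal.Quotient.mk I₁ (f * g) = 0 := by
    intro g hg
    apply hσ₁ _ _ ((key g hg).1)
    refine Submodule.mem_map_of_mem (p := MvPolynomial.homogeneousSubmodule _ ℂ t) ?_
    rw [MvPolynomial.mem_homogeneousSubmodule] at hf hg ⊢
    simpa [hdeg] using hf.mul hg
  have hz₂ : ∀ g ∈ MvPolynomial.homogeneousSubmodule (Fin (n + 1)) ℂ (t - α),
      Ideal.Quotient.mk I₂ (f * g) = 0 := by
    intro g hg
    apply hσ₂ _ _ ((key g hg).2)
    refine Submodule.mem_map_of_mem (p := MvPolynomial.homogeneousSubmodule _ ℂ t) ?_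
    rw [MvPolynomial.mem_homogeneousSubmodule] at hf hg ⊢
    simpa [hdeg] using hf.mul hg
  constructor
  · by_contra hne
    have ha : (Ideal.Quotient.mk I₁ f) ∈ qpiece I₁ α := Submodule.mem_map_of_mem hf
    have hane : (Ideal.Quotient.mk I₁ f) ≠ 0 := fun h =>
      hne (Ideal.Quotient.eq_zero_iff_mem.mp h)
    obtain ⟨b, hb, hab⟩ := hperf₁L α hα _ ha hane
    obtain ⟨g, hg, rfl⟩ := hb
    apply hab
    rw [AlgHom.toLinearMap_apply, Ideal.Quotient.mkₐ_eq_mk, ← map_mul]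
    exact hz₁ g hg
  · by_contra hne
    have ha : (Ideal.Quotient.mk I₂ f) ∈ qpiece I₂ α := Submodule.mem_map_of_mem hf
    have hane : (Ideal.Quotient.mk I₂ f) ≠ 0 := fun h =>
      hne (Ideal.Quotient.eq_zero_iff_mem.mp h)
    obtain ⟨b, hb, hab⟩ := hperf₂L α hα _ ha hane
    obtain ⟨g, hg, rfl⟩ := hb
    apply hab
    rw [AlgHom.toLinearMap_apply, Ideal.Quotient.mkₐ_eq_mk, ← map_mul]
    exact hz₂ g hg
end

section
/- Let S = ℂ[x₀,…,xₙ] and suppose g₁,…,g_m, h₁,…,h_c (with c ≤ m) form a homogeneous regular sequence. Let I = ⟨g₁,…,g_m⟩ and J = ⟨h₁,…,h_c, g_{c+1},…,g_m⟩. Then I + J = ⟨g₁,…,g_m, h₁,…,h_c⟩ is an ideal generated by a regular sequence of length m + c, and I ∩ J = ⟨{gᵢhⱼ : 1 ≤ i,j ≤ c}⟩ + ⟨g_{c+1},…,g_m⟩. -/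
open Ideal

lemma aux_inf_le_mul {R : Type*} [CommRing R] (A : Ideal R) :
    ∀ (q : ℕ) (y : Fin q → R),
      (∀ j : Fin q, ∀ b : R,
        b * y j ∈ A ⊔ Ideal.span (y '' {k | k < j}) →
          b ∈ A ⊔ Ideal.span (y '' {k | k < j})) →
      A ⊓ Ideal.span (Set.range y) ≤ A * Ideal.span (Set.range y) := by
  intro q
  induction q with
  | zero => intro y _; simp
  | succ q ih =>
    intro y hy f hf
    obtain ⟨hfA, hfY⟩ := hf
    set y' : Fin q → R := y ∘ Fin.castSucc with hy'
    have hsplit : Set.range y = insert (y (Fin.last q)) (Set.range y') := by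
      ext x
      constructor
      · rintro ⟨i, rfl⟩
        cases i using Fin.lastCases with
        | last => exact Set.mem_insert _ _
        | cast i => exact Set.mem_insert_of_mem _ ⟨i, rfl⟩
      · rintro (h | ⟨i, rfl⟩)
        · exact ⟨Fin.last q, h.symm⟩
        · exact ⟨i.castSucc, rfl⟩
    have himg : y '' {k : Fin (q + 1) | k < Fin.last q} = Set.range y' := by
      ext x
      constructor
      · rintro ⟨k, hk, rfl⟩
        have hk' : (k : ℕ) < q := hk
        exact ⟨⟨k, hk'⟩, rfl⟩
      · rintro ⟨i, rfl⟩
        exact ⟨i.castSucc, i.castSucc_lt_last, rfl⟩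
    rw [hsplit, Ideal.span_insert] at hfY
    obtain ⟨v, hv, u, hu, hfeq⟩ := Submodule.mem_sup.mp hfY
    obtain ⟨b, hb⟩ := Ideal.mem_span_singleton'.mp hv
    have hbmem : b * y (Fin.last q) ∈ A ⊔ Ideal.span (y '' {k | k < Fin.last q}) := by
      rw [himg, hb]
      have : v = f - u := by rw [← hfeq]; ring
      rw [this]
      exact sub_mem (Submodule.mem_sup_left hfA) (Submodule.mem_sup_right hu)
    have hbm := hy (Fin.last q) b hbmem
    rw [himg] at hbm
    obtain ⟨uA, huA, w, hw, hbeq⟩ := Submodule.mem_sup.mp hbm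
    have key : f - uA * y (Fin.last q) ∈ A ⊓ Ideal.span (Set.range y') := by
      constructor
      · exact sub_mem hfA (Ideal.mul_mem_right _ _ huA)
      · have : f - uA * y (Fin.last q) = u + w * y (Fin.last q) := by
          rw [← hfeq, ← hb, ← hbeq]; ring
        rw [this]
        exact add_mem hu (Ideal.mul_mem_right _ _ hw)
    have hyp' : ∀ j : Fin q, ∀ b : R,
        b * y' j ∈ A ⊔ Ideal.span (y' '' {k | k < j}) →
          b ∈ A ⊔ Ideal.span (y' '' {k | k < j}) := by
      intro j b hbj
      have himg2 : y' '' {k : Fin q | k < j} = y '' {k : Fin (q + 1) | k < j.castSucc} := by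
        ext x
        constructor
        · rintro ⟨k, hk, rfl⟩
          exact ⟨k.castSucc, by simpa using hk, rfl⟩
        · rintro ⟨k, hk, rfl⟩
          have hk2 : (k : ℕ) < (j : ℕ) := hk
          have hk' : (k : ℕ) < q := lt_trans hk2 j.isLt
          exact ⟨⟨k, hk'⟩, hk2, rfl⟩
      rw [himg2] at hbj ⊢
      exact hy j.castSucc b hbj
    have hmono : Ideal.span (Set.range y') ≤ Ideal.span (Set.range y) := by
      apply Ideal.span_mono
      rintro x ⟨i, rfl⟩
      exact ⟨i.castSucc, rfl⟩
    have h1 : f - uA * y (Fin.last q) ∈ A * Ideal.span (Set.range y) :=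
      Ideal.mul_mono_right hmono (ih y' hyp' key)
    have h2 : uA * y (Fin.last q) ∈ A * Ideal.span (Set.range y) :=
      Ideal.mul_mem_mul huA (Ideal.subset_span ⟨Fin.last q, rfl⟩)
    have : f = (f - uA * y (Fin.last q)) + uA * y (Fin.last q) := by ring
    rw [this]
    exact add_mem h1 h2
open Ideal

-- extraction of regularity for the h-part
lemma reg_extract {R : Type*} [CommRing R] {m c : ℕ}
    (g : Fin m → R) (h : Fin c → R)
    (hreg : RingTheory.Sequence.IsWeaklyRegular R (List.ofFn g ++ List.ofFn h))
    (j : Fin c) (b : R)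
    (hb : b * h j ∈ Ideal.span (Set.range g) ⊔ Ideal.span (h '' {k | k < j})) :
    b ∈ Ideal.span (Set.range g) ⊔ Ideal.span (h '' {k | k < j}) := by
  have hlen : (List.ofFn g ++ List.ofFn h).length = m + c := by simp
  have hidx : m + (j : ℕ) < (List.ofFn g ++ List.ofFn h).length := by
    rw [hlen]; exact Nat.add_lt_add_left j.isLt m
  have hr := hreg.regular_mod_prev (m + (j : ℕ)) hidx
  have hget : (List.ofFn g ++ List.ofFn h)[m + (j : ℕ)] = h j := by
    rw [List.getElem_append_right (by simp)]
    simp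
  rw [hget] at hr
  -- identify the take ideal
  have htake : (List.ofFn g ++ List.ofFn h).take (m + (j : ℕ))
      = List.ofFn g ++ (List.ofFn h).take (j : ℕ) := by
    rw [List.take_append]
    simp
  have hsetg : {r : R | r ∈ List.ofFn g} = Set.range g := by
    ext x; simp [List.mem_ofFn]
  have hseth : {r : R | r ∈ (List.ofFn h).take (j : ℕ)} = h '' {k | k < j} := by
    ext x
    simp only [Set.mem_setOf_eq, List.mem_take_iff_getElem]
    constructor
    · rintro ⟨i, hi, rfl⟩
      have hi' : i < c := lt_of_lt_of_le (lt_min_iff.mp hi).1 (le_of_lt j.isLt)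
      refine ⟨⟨i, hi'⟩, (lt_min_iff.mp hi).1, ?_⟩
      simp
    · rintro ⟨k, hk, rfl⟩
      have hk' : (k : ℕ) < (j : ℕ) := hk
      refine ⟨(k : ℕ), by simp [lt_min_iff, hk', k.isLt], ?_⟩
      simp
  have hQ : Ideal.ofList ((List.ofFn g ++ List.ofFn h).take (m + (j : ℕ)))
      = Ideal.span (Set.range g) ⊔ Ideal.span (h '' {k | k < j}) := by
    rw [htake, Ideal.ofList_append]
    unfold Ideal.ofList
    rw [hsetg, hseth]
  set Q := Ideal.span (Set.range g) ⊔ Ideal.span (h '' {k | k < j}) with hQdef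
  rw [hQ] at hr
  have hQtop : (Q • ⊤ : Submodule R R) = Q := by rw [smul_eq_mul, mul_top]
  have h0 : (h j) • (Submodule.Quotient.mk b : R ⧸ (Q • ⊤ : Submodule R R)) = (h j) • 0 := by
    rw [smul_zero, ← Submodule.Quotient.mk_smul, Submodule.Quotient.mk_eq_zero, hQtop,
      smul_eq_mul, mul_comm]
    exact hb
  have := hr h0
  rwa [Submodule.Quotient.mk_eq_zero, hQtop] at this



open MvPolynomial

/-- Subsection 2.2 of the paper: if `g₁,…,g_m,h₁,…,h_c` (`c ≤ m`) is a homogeneous regular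
sequence in `S = ℂ[x₀,…,xₙ]`, `I = ⟨g₁,…,g_m⟩` and `J = ⟨h₁,…,h_c,g_{c+1},…,g_m⟩`, then
`I + J = ⟨g₁,…,g_m,h₁,…,h_c⟩` (an ideal generated by a regular sequence of length `m+c`)
and `I ∩ J = ⟨gᵢhⱼ : 1 ≤ i,j ≤ c⟩ + ⟨g_{c+1},…,g_m⟩`. -/
theorem stmt8 {n m c : ℕ} (hcm : c ≤ m) (hmc : m + c ≤ n + 1)
    (dg : Fin m → ℕ) (dh : Fin c → ℕ)
    (g : Fin m → MvPolynomial (Fin (n + 1)) ℂ) (h : Fin c → MvPolynomial (Fin (n + 1)) ℂ)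
    (hdg : ∀ i, (g i).IsHomogeneous (dg i)) (hdh : ∀ j, (h j).IsHomogeneous (dh j))
    (hreg : RingTheory.Sequence.IsRegular (MvPolynomial (Fin (n + 1)) ℂ)
      (List.ofFn g ++ List.ofFn h))
    (I J : Ideal (MvPolynomial (Fin (n + 1)) ℂ))
    (hI : I = Ideal.span (Set.range g))
    (hJ : J = Ideal.span (Set.range h ∪ {x | ∃ i : Fin m, c ≤ (i : ℕ) ∧ x = g i})) :
    I ⊔ J = Ideal.span (Set.range g ∪ Set.range h) ∧
    I ⊓ J = Ideal.span
      ({x | ∃ (i : Fin m) (j : Fin c), (i : ℕ) < c ∧ x = g i * h j} ∪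
        {x | ∃ i : Fin m, c ≤ (i : ℕ) ∧ x = g i}) := by
  set E : Set (MvPolynomial (Fin (n + 1)) ℂ) := {x | ∃ i : Fin m, c ≤ (i : ℕ) ∧ x = g i} with hE
  set K : Ideal (MvPolynomial (Fin (n + 1)) ℂ) := Ideal.span E with hK
  set H : Ideal (MvPolynomial (Fin (n + 1)) ℂ) := Ideal.span (Set.range h) with hH
  have hJ' : J = K ⊔ H := by
    rw [hJ, Ideal.span_union, sup_comm]
  have hKI : K ≤ I := by
    rw [hK, hI, Ideal.span_le]
    rintro x ⟨i, -, rfl⟩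
    exact Ideal.subset_span ⟨i, rfl⟩
  constructor
  · -- first part
    rw [hI, hJ, ← Ideal.span_union]
    congr 1
    ext x
    constructor
    · rintro (hx | hx | ⟨i, -, rfl⟩)
      · exact Or.inl hx
      · exact Or.inr hx
      · exact Or.inl ⟨i, rfl⟩
    · rintro (hx | hx)
      · exact Or.inl hx
      · exact Or.inr (Or.inl hx)
  · -- second part
    have hIH : I ⊓ H = I * H := by
      refine le_antisymm ?_ Ideal.mul_le_inf
      rw [hI, hH]
      exact aux_inf_le_mul (Ideal.span (Set.range g)) c h
        (fun j b hb => reg_extract g h hreg.toIsWeaklyRegular j b hb)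
    have hmod : I ⊓ J = K ⊔ (H ⊓ I) := by
      rw [hJ', inf_comm, sup_inf_assoc_of_le H hKI]
    rw [hmod, inf_comm, hIH, hI, hH, Ideal.span_mul_span']
    apply le_antisymm
    · apply sup_le
      · rw [hK, Ideal.span_le]
        rintro x ⟨i, hi, rfl⟩
        exact Ideal.subset_span (Or.inr ⟨i, hi, rfl⟩)
      · rw [Ideal.span_le]
        rintro x ⟨a, ⟨i, rfl⟩, b, ⟨j, rfl⟩, rfl⟩
        by_cases hic : (i : ℕ) < c
        · exact Ideal.subset_span (Or.inl ⟨i, j, hic, rfl⟩)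
        · have : g i ∈ Ideal.span
              ({x | ∃ (i : Fin m) (j : Fin c), (i : ℕ) < c ∧ x = g i * h j} ∪ E) :=
            Ideal.subset_span (Or.inr ⟨i, le_of_not_gt hic, rfl⟩)
          simpa using Ideal.mul_mem_right (h j) _ this
    · rw [Ideal.span_le]
      rintro x (⟨i, j, hic, rfl⟩ | hx)
      · exact Submodule.mem_sup_right (Ideal.subset_span ⟨g i, ⟨i, rfl⟩, h j, ⟨j, rfl⟩, rfl⟩)
      · exact Submodule.mem_sup_left (Ideal.subset_span hx)
end

section
/- In the ring R = ℚ[x₂,x₃,x₄,x₅], let I₁ = ⟨x₂(x₂²+x₄²), x₃(x₃²+x₅²), x₄³, x₅³⟩ and I_sum = ⟨x₂, x₃, x₄³, x₅³⟩. Then dim (R/I₁)₈ = 1, the space (I_sum/I₁)₄ has dimension 18, and the symmetric bilinear form on (I_sum/I₁)₄ given by (f,g) ↦ fg ∈ (R/I₁)₈ ≅ ℚ is nondegenerate (its 18×18 Gram matrix has nonzero determinant). -/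
open MvPolynomial Module

namespace Stmt11

/-- `R = ℚ[x₂,x₃,x₄,x₅]`, with `x₂,x₃,x₄,x₅` encoded as `X 0, X 1, X 2, X 3`. -/
abbrev R := MvPolynomial (Fin 4) ℚ

/-- `I₁ = ⟨x₂(x₂²+x₄²), x₃(x₃²+x₅²), x₄³, x₅³⟩`. -/
noncomputable def I₁ : Ideal R :=
  Ideal.span {X 0 * (X 0 ^ 2 + X 2 ^ 2), X 1 * (X 1 ^ 2 + X 3 ^ 2), X 2 ^ 3, X 3 ^ 3}

/-- `I_sum = ⟨x₂, x₃, x₄³, x₅³⟩`. -/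
noncomputable def Isum : Ideal R :=
  Ideal.span {X 0, X 1, X 2 ^ 3, X 3 ^ 3}

/-- The degree-`e` graded piece of `R ⧸ I₁`. -/
noncomputable def qpiece (e : ℕ) : Submodule ℚ (R ⧸ I₁) :=
  (MvPolynomial.homogeneousSubmodule (Fin 4) ℚ e).map (Ideal.Quotient.mkₐ ℚ I₁).toLinearMap

/-- The degree-`e` piece of the image `(I_sum/I₁)` in `R ⧸ I₁`. -/
noncomputable def B (e : ℕ) : Submodule ℚ (R ⧸ I₁) :=
  ((Submodule.restrictScalars ℚ Isum) ⊓ MvPolynomial.homogeneousSubmodule (Fin 4) ℚ e).map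
    (Ideal.Quotient.mkₐ ℚ I₁).toLinearMap

/-! ### Exponent-vector helpers -/

noncomputable def ee (v : Fin 4 → ℕ) : Fin 4 →₀ ℕ := Finsupp.equivFunOnFinite.symm v

@[simp] lemma ee_apply (v : Fin 4 → ℕ) (i : Fin 4) : ee v i = v i := by
  simp [ee]

lemma ee_inj {v w : Fin 4 → ℕ} (h : ee v = ee w) : v = w :=
  Finsupp.equivFunOnFinite.symm.injective h

lemma ee_add (v w : Fin 4 → ℕ) : ee (v + w) = ee v + ee w := by
  ext i; simp

lemma ee_le {v w : Fin 4 → ℕ} (h : ∀ i, v i ≤ w i) : ee v ≤ ee w := by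
  intro i; simpa using h i

lemma ee_sub {t v w : Fin 4 → ℕ} (h : ∀ i, t i - v i = w i) : ee t - ee v = ee w := by
  ext i; simp [Finsupp.tsub_apply, h i]

lemma ee_coe (u : Fin 4 →₀ ℕ) : ee (⇑u) = u :=
  Finsupp.equivFunOnFinite.symm_apply_apply u

lemma degree_ee (v : Fin 4 → ℕ) : (ee v).degree = v 0 + v 1 + v 2 + v 3 := by
  have : (ee v).degree = ∑ i : Fin 4, (ee v) i := by
    refine Finset.sum_subset (Finset.subset_univ _) ?_
    intro i _ hi
    exact Finsupp.notMem_support_iff.mp hi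
  rw [this, Fin.sum_univ_four]
  simp

/-- Monomial with exponent vector `v`. -/
noncomputable def mono (v : Fin 4 → ℕ) : R := monomial (ee v) 1

lemma mono_mul (v w : Fin 4 → ℕ) : mono v * mono w = mono (v + w) := by
  simp [mono, monomial_mul, ee_add]

lemma single_eq_ee (i : Fin 4) (k : ℕ) :
    Finsupp.single i k = ee (fun j => if i = j then k else 0) := by
  ext j
  simp [Finsupp.single_apply]

lemma Xpow_mono (i : Fin 4) (k : ℕ) :
    (X i : R) ^ k = mono (fun j => if i = j then k else 0) := by
  rw [X_pow_eq_monomial, mono, single_eq_ee]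

lemma X0_eq : (X 0 : R) = mono ![1,0,0,0] := by
  rw [show (X 0 : R) = (X 0 : R) ^ 1 by ring, Xpow_mono]
  congr 1
  decide

lemma X1_eq : (X 1 : R) = mono ![0,1,0,0] := by
  rw [show (X 1 : R) = (X 1 : R) ^ 1 by ring, Xpow_mono]
  congr 1
  decide

lemma X2pow3_eq : (X 2 : R) ^ 3 = mono ![0,0,3,0] := by
  rw [Xpow_mono]; congr 1; decide

lemma X3pow3_eq : (X 3 : R) ^ 3 = mono ![0,0,0,3] := by
  rw [Xpow_mono]; congr 1; decide

lemma g1_eq : (X 0 * (X 0 ^ 2 + X 2 ^ 2) : R) = mono ![3,0,0,0] + mono ![1,0,2,0] := by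
  have h1 : (X 0 * (X 0 ^ 2 + X 2 ^ 2) : R) = (X 0)^3 + (X 0)^1 * (X 2)^2 := by ring
  rw [h1, Xpow_mono 0 3, Xpow_mono 0 1, Xpow_mono 2 2, mono_mul]
  congr 1
  · congr 1; decide
  · congr 1; decide

lemma g2_eq : (X 1 * (X 1 ^ 2 + X 3 ^ 2) : R) = mono ![0,3,0,0] + mono ![0,1,0,2] := by
  have h1 : (X 1 * (X 1 ^ 2 + X 3 ^ 2) : R) = (X 1)^3 + (X 1)^1 * (X 3)^2 := by ring
  rw [h1, Xpow_mono 1 3, Xpow_mono 1 1, Xpow_mono 3 2, mono_mul]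
  congr 1
  · congr 1; decide
  · congr 1; decide

/-! ### The socle functional φ -/

noncomputable def φ : R →ₗ[ℚ] ℚ :=
  lcoeff ℚ (ee ![4,4,0,0]) - lcoeff ℚ (ee ![4,2,0,2]) - lcoeff ℚ (ee ![2,4,2,0])
    + lcoeff ℚ (ee ![2,2,2,2])

lemma phi_apply (p : R) :
    φ p = coeff (ee ![4,4,0,0]) p - coeff (ee ![4,2,0,2]) p - coeff (ee ![2,4,2,0]) p
      + coeff (ee ![2,2,2,2]) p := by
  simp [φ, lcoeff]

lemma coeff_mul_mono_eq (q : R) (t v w : Fin 4 → ℕ) (hle : ∀ i, v i ≤ t i)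
    (hsub : ∀ i, t i - v i = w i) :
    coeff (ee t) (q * mono v) = coeff (ee w) q := by
  rw [mono, coeff_mul_monomial', if_pos (ee_le hle), ee_sub hsub, mul_one]

lemma coeff_mul_mono_zero (q : R) (t v : Fin 4 → ℕ) (i : Fin 4) (h : t i < v i) :
    coeff (ee t) (q * mono v) = 0 := by
  rw [mono, coeff_mul_monomial', if_neg]
  intro hle
  have := hle i
  simp only [ee_apply] at this
  omega

lemma phi_mul_g1 (q : R) : φ (q * (mono ![3,0,0,0] + mono ![1,0,2,0])) = 0 := by
  rw [mul_add, map_add, phi_apply, phi_apply]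
  rw [coeff_mul_mono_eq q ![4,4,0,0] ![3,0,0,0] ![1,4,0,0] (by decide) (by decide),
      coeff_mul_mono_eq q ![4,2,0,2] ![3,0,0,0] ![1,2,0,2] (by decide) (by decide),
      coeff_mul_mono_zero q ![2,4,2,0] ![3,0,0,0] 0 (by decide),
      coeff_mul_mono_zero q ![2,2,2,2] ![3,0,0,0] 0 (by decide),
      coeff_mul_mono_zero q ![4,4,0,0] ![1,0,2,0] 2 (by decide),
      coeff_mul_mono_zero q ![4,2,0,2] ![1,0,2,0] 2 (by decide),
      coeff_mul_mono_eq q ![2,4,2,0] ![1,0,2,0] ![1,4,0,0] (by decide) (by decide),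
      coeff_mul_mono_eq q ![2,2,2,2] ![1,0,2,0] ![1,2,0,2] (by decide) (by decide)]
  ring

lemma phi_mul_g2 (q : R) : φ (q * (mono ![0,3,0,0] + mono ![0,1,0,2])) = 0 := by
  rw [mul_add, map_add, phi_apply, phi_apply]
  rw [coeff_mul_mono_eq q ![4,4,0,0] ![0,3,0,0] ![4,1,0,0] (by decide) (by decide),
      coeff_mul_mono_zero q ![4,2,0,2] ![0,3,0,0] 1 (by decide),
      coeff_mul_mono_eq q ![2,4,2,0] ![0,3,0,0] ![2,1,2,0] (by decide) (by decide),
      coeff_mul_mono_zero q ![2,2,2,2] ![0,3,0,0] 1 (by decide),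
      coeff_mul_mono_zero q ![4,4,0,0] ![0,1,0,2] 3 (by decide),
      coeff_mul_mono_eq q ![4,2,0,2] ![0,1,0,2] ![4,1,0,0] (by decide) (by decide),
      coeff_mul_mono_zero q ![2,4,2,0] ![0,1,0,2] 3 (by decide),
      coeff_mul_mono_eq q ![2,2,2,2] ![0,1,0,2] ![2,1,2,0] (by decide) (by decide)]
  ring

lemma phi_mul_g3 (q : R) : φ (q * mono ![0,0,3,0]) = 0 := by
  rw [phi_apply]
  rw [coeff_mul_mono_zero q ![4,4,0,0] ![0,0,3,0] 2 (by decide),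
      coeff_mul_mono_zero q ![4,2,0,2] ![0,0,3,0] 2 (by decide),
      coeff_mul_mono_zero q ![2,4,2,0] ![0,0,3,0] 2 (by decide),
      coeff_mul_mono_zero q ![2,2,2,2] ![0,0,3,0] 2 (by decide)]
  ring

lemma phi_mul_g4 (q : R) : φ (q * mono ![0,0,0,3]) = 0 := by
  rw [phi_apply]
  rw [coeff_mul_mono_zero q ![4,4,0,0] ![0,0,0,3] 3 (by decide),
      coeff_mul_mono_zero q ![4,2,0,2] ![0,0,0,3] 3 (by decide),
      coeff_mul_mono_zero q ![2,4,2,0] ![0,0,0,3] 3 (by decide),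
      coeff_mul_mono_zero q ![2,2,2,2] ![0,0,0,3] 3 (by decide)]
  ring

lemma phi_killed {p : R} (hp : p ∈ I₁) : ∀ q : R, φ (q * p) = 0 := by
  refine Submodule.span_induction ?_ ?_ ?_ ?_ hp
  · intro x hx
    simp only [Set.mem_insert_iff, Set.mem_singleton_iff] at hx
    rcases hx with rfl | rfl | rfl | rfl
    · intro q; rw [g1_eq]; exact phi_mul_g1 q
    · intro q; rw [g2_eq]; exact phi_mul_g2 q
    · intro q; rw [X2pow3_eq]; exact phi_mul_g3 q
    · intro q; rw [X3pow3_eq]; exact phi_mul_g4 q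
  · intro q; simp
  · intro x y _ _ hx hy q
    rw [mul_add, map_add, hx q, hy q, add_zero]
  · intro a x _ hx q
    rw [smul_eq_mul, ← mul_assoc]
    exact hx (q * a)

lemma phi_zero_of_mem {p : R} (hp : p ∈ I₁) : φ p = 0 := by
  simpa using phi_killed hp 1

/-- Computable version of `φ` on monomials. -/
def phifc (a b c d : ℕ) : ℤ :=
  (if a = 4 ∧ b = 4 ∧ c = 0 ∧ d = 0 then 1 else 0)
    - (if a = 4 ∧ b = 2 ∧ c = 0 ∧ d = 2 then 1 else 0)
    - (if a = 2 ∧ b = 4 ∧ c = 2 ∧ d = 0 then 1 else 0)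
    + (if a = 2 ∧ b = 2 ∧ c = 2 ∧ d = 2 then 1 else 0)

def phif (v : Fin 4 → ℕ) : ℤ := phifc (v 0) (v 1) (v 2) (v 3)

lemma vec_eq_iff (v : Fin 4 → ℕ) (a b c d : ℕ) :
    v = ![a,b,c,d] ↔ v 0 = a ∧ v 1 = b ∧ v 2 = c ∧ v 3 = d := by
  constructor
  · rintro rfl; exact ⟨rfl, rfl, rfl, rfl⟩
  · rintro ⟨h0, h1, h2, h3⟩
    funext i
    fin_cases i <;> first | exact h0 | exact h1 | exact h2 | exact h3

lemma phi_mono (v : Fin 4 → ℕ) : φ (mono v) = (phif v : ℚ) := by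
  have key : ∀ t : Fin 4 → ℕ, coeff (ee t) (mono v) = if v = t then (1 : ℚ) else 0 := by
    intro t
    rw [mono, coeff_monomial]
    congr 1
    simp only [eq_iff_iff]
    exact ⟨fun h => ee_inj h, fun h => by rw [h]⟩
  rw [phi_apply, key, key, key, key]
  simp only [phif, phifc, vec_eq_iff]
  push_cast [apply_ite (Int.cast : ℤ → ℚ)]
  split_ifs <;> norm_num

/-! ### The quotient map -/

noncomputable abbrev mk' : R →+* R ⧸ I₁ := Ideal.Quotient.mk I₁

lemma mk_red0 (a b c d : ℕ) :
    mk' (mono ![a+3,b,c,d]) = - mk' (mono ![a+1,b,c+2,d]) := by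
  have h : mono ![a+3,b,c,d] + mono ![a+1,b,c+2,d]
      = mono ![a,b,c,d] * (X 0 * (X 0 ^ 2 + X 2 ^ 2)) := by
    rw [g1_eq, mul_add, mono_mul, mono_mul]
    congr 2 <;> · funext i; fin_cases i <;> simp [Matrix.cons_val_zero, Matrix.cons_val_one] <;> omega
  have hmem : (X 0 * (X 0 ^ 2 + X 2 ^ 2) : R) ∈ I₁ := Ideal.subset_span (by simp)
  have : mk' (mono ![a+3,b,c,d]) + mk' (mono ![a+1,b,c+2,d]) = 0 := by
    rw [← map_add, h, map_mul, Ideal.Quotient.eq_zero_iff_mem.mpr hmem, mul_zero]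
  linear_combination this

lemma mk_red1 (a b c d : ℕ) :
    mk' (mono ![a,b+3,c,d]) = - mk' (mono ![a,b+1,c,d+2]) := by
  have h : mono ![a,b+3,c,d] + mono ![a,b+1,c,d+2]
      = mono ![a,b,c,d] * (X 1 * (X 1 ^ 2 + X 3 ^ 2)) := by
    rw [g2_eq, mul_add, mono_mul, mono_mul]
    congr 2 <;> · funext i; fin_cases i <;> simp [Matrix.cons_val_zero, Matrix.cons_val_one] <;> omega
  have hmem : (X 1 * (X 1 ^ 2 + X 3 ^ 2) : R) ∈ I₁ := Ideal.subset_span (by simp)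
  have : mk' (mono ![a,b+3,c,d]) + mk' (mono ![a,b+1,c,d+2]) = 0 := by
    rw [← map_add, h, map_mul, Ideal.Quotient.eq_zero_iff_mem.mpr hmem, mul_zero]
  linear_combination this

lemma mk_red2 (a b c d : ℕ) : mk' (mono ![a,b,c+3,d]) = 0 := by
  have h : mono ![a,b,c+3,d] = mono ![a,b,c,d] * (X 2 ^ 3) := by
    rw [X2pow3_eq, mono_mul]
    congr 1
    funext i; fin_cases i <;> simp
  have hmem : ((X 2 : R) ^ 3) ∈ I₁ := Ideal.subset_span (by simp)
  rw [h, map_mul, Ideal.Quotient.eq_zero_iff_mem.mpr hmem, mul_zero]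

lemma mk_red3 (a b c d : ℕ) : mk' (mono ![a,b,c,d+3]) = 0 := by
  have h : mono ![a,b,c,d+3] = mono ![a,b,c,d] * (X 3 ^ 3) := by
    rw [X3pow3_eq, mono_mul]
    congr 1
    funext i; fin_cases i <;> simp
  have hmem : ((X 3 : R) ^ 3) ∈ I₁ := Ideal.subset_span (by simp)
  rw [h, map_mul, Ideal.Quotient.eq_zero_iff_mem.mpr hmem, mul_zero]

/-! ### Part 1: the degree-8 piece -/

lemma red8 : ∀ (n a b c d : ℕ), a + b ≤ n → a + b + c + d = 8 →
    mk' (mono ![a,b,c,d]) ∈ Submodule.span ℚ {mk' (mono ![2,2,2,2])} := by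
  intro n
  induction n with
  | zero =>
    intro a b c d hab hsum
    have ha : a = 0 := by omega
    have hb : b = 0 := by omega
    subst ha; subst hb
    rcases (by omega : 3 ≤ c ∨ 3 ≤ d) with h | h
    · obtain ⟨c', rfl⟩ : ∃ c', c = c' + 3 := ⟨c - 3, by omega⟩
      rw [mk_red2]; exact Submodule.zero_mem _
    · obtain ⟨d', rfl⟩ : ∃ d', d = d' + 3 := ⟨d - 3, by omega⟩
      rw [mk_red3]; exact Submodule.zero_mem _
  | succ n ih =>
    intro a b c d hab hsum
    by_cases ha : 3 ≤ a
    · obtain ⟨a', rfl⟩ : ∃ a', a = a' + 3 := ⟨a - 3, by omega⟩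
      rw [mk_red0]
      exact Submodule.neg_mem _ (ih (a'+1) b (c+2) d (by omega) (by omega))
    · by_cases hb : 3 ≤ b
      · obtain ⟨b', rfl⟩ : ∃ b', b = b' + 3 := ⟨b - 3, by omega⟩
        rw [mk_red1]
        exact Submodule.neg_mem _ (ih a (b'+1) c (d+2) (by omega) (by omega))
      · by_cases hc : 3 ≤ c
        · obtain ⟨c', rfl⟩ : ∃ c', c = c' + 3 := ⟨c - 3, by omega⟩
          rw [mk_red2]; exact Submodule.zero_mem _
        · by_cases hd : 3 ≤ d
          · obtain ⟨d', rfl⟩ : ∃ d', d = d' + 3 := ⟨d - 3, by omega⟩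
            rw [mk_red3]; exact Submodule.zero_mem _
          · have : a = 2 ∧ b = 2 ∧ c = 2 ∧ d = 2 := by omega
            obtain ⟨rfl, rfl, rfl, rfl⟩ := this
            exact Submodule.subset_span rfl

lemma coe_eq_vec (u : Fin 4 →₀ ℕ) : (⇑u : Fin 4 → ℕ) = ![u 0, u 1, u 2, u 3] := by
  funext i; fin_cases i <;> rfl

lemma degree_coe (u : Fin 4 →₀ ℕ) (hd : u.degree = n) : u 0 + u 1 + u 2 + u 3 = n := by
  rw [← hd, ← degree_ee (⇑u), ee_coe]

lemma mk_as_sum (p : R) :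
    mk' p = ∑ u ∈ p.support, coeff u p • mk' (mono (⇑u)) := by
  conv_lhs => rw [p.as_sum]
  rw [map_sum]
  refine Finset.sum_congr rfl fun u _ => ?_
  have : monomial u (coeff u p) = coeff u p • mono (⇑u) := by
    rw [mono, ee_coe, smul_monomial, smul_eq_mul, mul_one]
  rw [this]
  exact (Ideal.Quotient.mkₐ ℚ I₁).toLinearMap.map_smul _ _

lemma qpiece8_eq : qpiece 8 = Submodule.span ℚ {mk' (mono ![2,2,2,2])} := by
  apply le_antisymm
  · rintro x ⟨p, hp, rfl⟩
    have hp : MvPolynomial.IsHomogeneous p 8 := hp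
    show mk' p ∈ Submodule.span ℚ {mk' (mono ![2,2,2,2])}
    rw [mk_as_sum p]
    refine Submodule.sum_mem _ ?_
    intro u hu
    refine Submodule.smul_mem _ _ ?_
    have hc : coeff u p ≠ 0 := mem_support_iff.mp hu
    have hdeg : u.degree = 8 := by
      by_contra h
      exact hc (hp.coeff_eq_zero h)
    have hs := degree_coe u hdeg
    rw [coe_eq_vec u]
    exact red8 (u 0 + u 1) (u 0) (u 1) (u 2) (u 3) le_rfl hs
  · rw [Submodule.span_le, Set.singleton_subset_iff]
    refine ⟨mono ![2,2,2,2], ?_, rfl⟩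
    show MvPolynomial.IsHomogeneous _ 8
    exact isHomogeneous_monomial _ (by rw [degree_ee]; decide)

lemma mk_mu_ne : mk' (mono ![2,2,2,2]) ≠ 0 := by
  intro h
  have hmem : mono ![2,2,2,2] ∈ I₁ := Ideal.Quotient.eq_zero_iff_mem.mp h
  have := phi_zero_of_mem hmem
  rw [phi_mono] at this
  have h2 : phif ![2,2,2,2] = 0 := by exact_mod_cast this
  revert h2
  decide

instance : Nontrivial (R ⧸ I₁) := ⟨_, _, mk_mu_ne⟩

/-! ### Part 2: the space B 4 -/

def mv : Fin 18 → Fin 4 → ℕ :=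
  ![![0,1,1,2], ![0,1,2,1], ![0,2,0,2], ![0,2,1,1], ![0,2,2,0], ![1,0,1,2],
    ![1,0,2,1], ![1,1,0,2], ![1,1,1,1], ![1,1,2,0], ![1,2,0,1], ![1,2,1,0],
    ![2,0,0,2], ![2,0,1,1], ![2,0,2,0], ![2,1,0,1], ![2,1,1,0], ![2,2,0,0]]

noncomputable def T : (Fin 18 → ℚ) →ₗ[ℚ] (R ⧸ I₁) where
  toFun c := ∑ j, c j • mk' (mono (mv j))
  map_add' c₁ c₂ := by
    simp [add_smul, Finset.sum_add_distrib]
  map_smul' r c := by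
    simp [Finset.smul_sum, smul_smul]

lemma T_apply (c : Fin 18 → ℚ) : T c = ∑ j, c j • mk' (mono (mv j)) := rfl

lemma T_single (j : Fin 18) : T (Pi.single j 1) = mk' (mono (mv j)) := by
  rw [T_apply]
  rw [Finset.sum_eq_single j]
  · simp
  · intro k _ hk; simp [Pi.single_apply, hk]
  · simp

lemma mono_mem_Isum (v : Fin 4 → ℕ) (h : 1 ≤ v 0 ∨ 1 ≤ v 1) : mono v ∈ Isum := by
  rcases h with h | h
  · have hX : (X 0 : R) ∈ Isum := Ideal.subset_span (by simp)
    have : mono v = mono (fun i => v i - ![1,0,0,0] i) * X 0 := by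
      rw [X0_eq, mono_mul]
      congr 1
      funext i; fin_cases i <;> simp <;> omega
    rw [this]
    exact Ideal.mul_mem_left _ _ hX
  · have hX : (X 1 : R) ∈ Isum := Ideal.subset_span (by simp)
    have : mono v = mono (fun i => v i - ![0,1,0,0] i) * X 1 := by
      rw [X1_eq, mono_mul]
      congr 1
      funext i; fin_cases i <;> simp <;> omega
    rw [this]
    exact Ideal.mul_mem_left _ _ hX

lemma mono_homog (v : Fin 4 → ℕ) (n : ℕ) (h : v 0 + v 1 + v 2 + v 3 = n) :
    (mono v).IsHomogeneous n := by
  apply isHomogeneous_monomial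
  rw [degree_ee]; exact h

lemma mB4 (j : Fin 18) : mk' (mono (mv j)) ∈ B 4 := by
  refine ⟨mono (mv j), ⟨?_, ?_⟩, rfl⟩
  · exact mono_mem_Isum _ ((by decide : ∀ j : Fin 18, 1 ≤ mv j 0 ∨ 1 ≤ mv j 1) j)
  · show MvPolynomial.IsHomogeneous _ 4
    exact mono_homog _ 4 ((by decide : ∀ j : Fin 18, mv j 0 + mv j 1 + mv j 2 + mv j 3 = 4) j)

lemma mem_rangeT (j : Fin 18) : mk' (mono (mv j)) ∈ LinearMap.range T :=
  ⟨Pi.single j 1, T_single j⟩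

/-- Coefficient vanishing for `Isum`: the coefficient of a monomial not divisible by
any generator vanishes for every element of `Isum` (times anything). -/
lemma isum_coeff {p : R} (hp : p ∈ Isum) :
    ∀ (q : R) (v : Fin 4 → ℕ), v 0 = 0 → v 1 = 0 → v 2 ≤ 2 → v 3 ≤ 2 →
      coeff (ee v) (q * p) = 0 := by
  refine Submodule.span_induction ?_ ?_ ?_ ?_ hp
  · intro x hx
    simp only [Set.mem_insert_iff, Set.mem_singleton_iff] at hx
    rcases hx with rfl | rfl | rfl | rfl
    · intro q v h0 h1 h2 h3
      rw [X0_eq]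
      exact coeff_mul_mono_zero q v ![1,0,0,0] 0 (by simp [h0])
    · intro q v h0 h1 h2 h3
      rw [X1_eq]
      exact coeff_mul_mono_zero q v ![0,1,0,0] 1 (by simp [h1])
    · intro q v h0 h1 h2 h3
      rw [X2pow3_eq]
      exact coeff_mul_mono_zero q v ![0,0,3,0] 2 (by simp; omega)
    · intro q v h0 h1 h2 h3
      rw [X3pow3_eq]
      exact coeff_mul_mono_zero q v ![0,0,0,3] 3 (by simp; omega)
  · intro q v h0 h1 h2 h3; simp
  · intro x y _ _ hx hy q v h0 h1 h2 h3
    rw [mul_add, coeff_add, hx q v h0 h1 h2 h3, hy q v h0 h1 h2 h3, add_zero]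
  · intro a x _ hx q v h0 h1 h2 h3
    rw [smul_eq_mul, ← mul_assoc]
    exact hx (q * a) v h0 h1 h2 h3

lemma red4 : ∀ (n a b c d : ℕ), a + b ≤ n → a + b + c + d = 4 →
    (a = 0 → b = 0 → 3 ≤ c ∨ 3 ≤ d) →
    mk' (mono ![a,b,c,d]) ∈ LinearMap.range T := by
  intro n
  induction n with
  | zero =>
    intro a b c d hab hsum hdom
    have ha : a = 0 := by omega
    have hb : b = 0 := by omega
    subst ha; subst hb
    rcases hdom rfl rfl with h | h
    · obtain ⟨c', rfl⟩ : ∃ c', c = c' + 3 := ⟨c - 3, by omega⟩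
      rw [mk_red2]; exact Submodule.zero_mem _
    · obtain ⟨d', rfl⟩ : ∃ d', d = d' + 3 := ⟨d - 3, by omega⟩
      rw [mk_red3]; exact Submodule.zero_mem _
  | succ n ih =>
    intro a b c d hab hsum hdom
    by_cases ha : 3 ≤ a
    · obtain ⟨a', rfl⟩ : ∃ a', a = a' + 3 := ⟨a - 3, by omega⟩
      rw [mk_red0]
      exact Submodule.neg_mem _ (ih (a'+1) b (c+2) d (by omega) (by omega) (by omega))
    · by_cases hb : 3 ≤ b
      · obtain ⟨b', rfl⟩ : ∃ b', b = b' + 3 := ⟨b - 3, by omega⟩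
        rw [mk_red1]
        exact Submodule.neg_mem _ (ih a (b'+1) c (d+2) (by omega) (by omega) (by omega))
      · by_cases hc : 3 ≤ c
        · obtain ⟨c', rfl⟩ : ∃ c', c = c' + 3 := ⟨c - 3, by omega⟩
          rw [mk_red2]; exact Submodule.zero_mem _
        · by_cases hd : 3 ≤ d
          · obtain ⟨d', rfl⟩ : ∃ d', d = d' + 3 := ⟨d - 3, by omega⟩
            rw [mk_red3]; exact Submodule.zero_mem _
          · have ha2 : a ≤ 2 := by omega
            have hb2 : b ≤ 2 := by omega
            have hc2 : c ≤ 2 := by omega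
            have hd2 : d ≤ 2 := by omega
            have hab0 : ¬ (a = 0 ∧ b = 0) := by
              rintro ⟨rfl, rfl⟩
              rcases hdom rfl rfl with h | h <;> omega
            have hfin : ∀ (a b c d : Fin 3), a.val + b.val + c.val + d.val = 4 →
                ¬ (a.val = 0 ∧ b.val = 0) →
                ∃ j : Fin 18, mv j = ![a.val, b.val, c.val, d.val] := by decide
            obtain ⟨j, hj⟩ := hfin ⟨a, by omega⟩ ⟨b, by omega⟩ ⟨c, by omega⟩ ⟨d, by omega⟩
              hsum hab0
            have := mem_rangeT j
            rw [hj] at this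
            exact this

lemma B4_eq : B 4 = LinearMap.range T := by
  apply le_antisymm
  · rintro x ⟨p, ⟨hpI, hph⟩, rfl⟩
    have hph : MvPolynomial.IsHomogeneous p 4 := hph
    have hpI' : p ∈ Isum := hpI
    show mk' p ∈ LinearMap.range T
    rw [mk_as_sum p]
    refine Submodule.sum_mem _ ?_
    intro u hu
    refine Submodule.smul_mem _ _ ?_
    have hc : coeff u p ≠ 0 := mem_support_iff.mp hu
    have hdeg : u.degree = 4 := by
      by_contra h
      exact hc (hph.coeff_eq_zero h)
    have hs := degree_coe u hdeg
    have hdom : u 0 = 0 → u 1 = 0 → 3 ≤ u 2 ∨ 3 ≤ u 3 := by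
      intro h0 h1
      by_contra h
      push_neg at h
      have := isum_coeff hpI' 1 (⇑u) h0 h1 (by omega) (by omega)
      rw [one_mul, ee_coe] at this
      exact hc this
    rw [coe_eq_vec u]
    exact red4 (u 0 + u 1) (u 0) (u 1) (u 2) (u 3) le_rfl hs hdom
  · rintro x ⟨c, rfl⟩
    rw [T_apply]
    exact Submodule.sum_mem _ fun j _ => Submodule.smul_mem _ _ (mB4 j)

/-! ### The Gram matrix argument -/

def KL : Fin 18 → Fin 18 → ℤ :=
  ![![0,0,0,0,0,0,0,0,0,0,0,0,0,0,0,0,1,0],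
    ![0,0,0,0,0,0,0,0,0,0,0,0,0,0,0,1,0,0],
    ![0,0,0,0,0,0,0,0,0,0,0,0,0,0,1,0,0,0],
    ![0,0,0,0,0,0,0,0,0,0,0,0,0,1,0,0,0,0],
    ![0,0,0,0,0,0,0,0,0,0,0,0,1,0,0,0,0,-1],
    ![0,0,0,0,0,0,0,0,0,0,0,1,0,0,0,0,0,0],
    ![0,0,0,0,0,0,0,0,0,0,1,0,0,0,0,0,0,0],
    ![0,0,0,0,0,0,0,0,0,1,0,0,0,0,0,0,0,0],
    ![0,0,0,0,0,0,0,0,1,0,0,0,0,0,0,0,0,0],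
    ![0,0,0,0,0,0,0,1,0,0,0,0,0,0,0,0,0,0],
    ![0,0,0,0,0,0,1,0,0,0,0,0,0,0,0,0,0,0],
    ![0,0,0,0,0,1,0,0,0,0,0,-1,0,0,0,0,0,0],
    ![0,0,0,0,1,0,0,0,0,0,0,0,0,0,0,0,0,-1],
    ![0,0,0,1,0,0,0,0,0,0,0,0,0,0,0,0,0,0],
    ![0,0,1,0,0,0,0,0,0,0,0,0,0,0,0,0,0,0],
    ![0,1,0,0,0,0,0,0,0,0,0,0,0,0,0,-1,0,0],
    ![1,0,0,0,0,0,0,0,0,0,0,0,0,0,0,0,0,0],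
    ![0,0,0,0,-1,0,0,0,0,0,0,0,-1,0,0,0,0,1]]

def NL : Fin 18 → Fin 18 → ℤ :=
  ![![0,0,0,0,0,0,0,0,0,0,0,0,0,0,0,0,1,0],
    ![0,1,0,0,0,0,0,0,0,0,0,0,0,0,0,1,0,0],
    ![0,0,0,0,0,0,0,0,0,0,0,0,0,0,1,0,0,0],
    ![0,0,0,0,0,0,0,0,0,0,0,0,0,1,0,0,0,0],
    ![0,0,0,0,-1,0,0,0,0,0,0,0,0,0,0,0,0,-1],
    ![0,0,0,0,0,1,0,0,0,0,0,1,0,0,0,0,0,0],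
    ![0,0,0,0,0,0,0,0,0,0,1,0,0,0,0,0,0,0],
    ![0,0,0,0,0,0,0,0,0,1,0,0,0,0,0,0,0,0],
    ![0,0,0,0,0,0,0,0,1,0,0,0,0,0,0,0,0,0],
    ![0,0,0,0,0,0,0,1,0,0,0,0,0,0,0,0,0,0],
    ![0,0,0,0,0,0,1,0,0,0,0,0,0,0,0,0,0,0],
    ![0,0,0,0,0,1,0,0,0,0,0,0,0,0,0,0,0,0],
    ![0,0,0,0,0,0,0,0,0,0,0,0,-1,0,0,0,0,-1],
    ![0,0,0,1,0,0,0,0,0,0,0,0,0,0,0,0,0,0],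
    ![0,0,1,0,0,0,0,0,0,0,0,0,0,0,0,0,0,0],
    ![0,1,0,0,0,0,0,0,0,0,0,0,0,0,0,0,0,0],
    ![1,0,0,0,0,0,0,0,0,0,0,0,0,0,0,0,0,0],
    ![0,0,0,0,-1,0,0,0,0,0,0,0,-1,0,0,0,0,-1]]

set_option maxHeartbeats 2000000 in
lemma Kval : ∀ i j : Fin 18, phif (mv j + mv i) = KL i j := by decide

set_option maxHeartbeats 2000000 in
lemma NKlit : ∀ k j : Fin 18, (∑ i, NL k i * KL i j) = if k = j then 1 else 0 := by decide

lemma NKq : ∀ k j : Fin 18, (∑ i, (NL k i : ℚ) * (KL i j : ℚ)) = if k = j then 1 else 0 := by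
  intro k j
  have h := congrArg (Int.cast : ℤ → ℚ) (NKlit k j)
  push_cast [apply_ite (Int.cast : ℤ → ℚ)] at h
  exact h

lemma Tker (c : Fin 18 → ℚ) (h : ∀ i, T c * mk' (mono (mv i)) = 0) : c = 0 := by
  have hrow : ∀ i, ∑ j, c j * (KL i j : ℚ) = 0 := by
    intro i
    have hP : (∑ j, c j • (mono (mv j) * mono (mv i))) ∈ I₁ := by
      rw [← Ideal.Quotient.eq_zero_iff_mem]
      have heq : mk' (∑ j, c j • (mono (mv j) * mono (mv i)))
          = T c * mk' (mono (mv i)) := by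
        rw [map_sum, T_apply, Finset.sum_mul]
        refine Finset.sum_congr rfl fun j _ => ?_
        rw [smul_mul_assoc, ← map_mul]
        exact map_smul (Ideal.Quotient.mkₐ ℚ I₁).toLinearMap _ _
      rw [heq, h i]
    have h0 := phi_zero_of_mem hP
    rw [map_sum] at h0
    calc ∑ j, c j * (KL i j : ℚ)
        = ∑ j, φ (c j • (mono (mv j) * mono (mv i))) := by
          refine Finset.sum_congr rfl fun j _ => ?_
          rw [map_smul, smul_eq_mul, mono_mul, phi_mono, Kval]
      _ = 0 := h0
  funext k
  have h1 : ∑ j, c j * ∑ i, (NL k i : ℚ) * (KL i j : ℚ) = c k := by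
    simp only [NKq]
    simp [mul_ite]
  have h2 : ∑ j, c j * ∑ i, (NL k i : ℚ) * (KL i j : ℚ)
      = ∑ i, (NL k i : ℚ) * ∑ j, c j * (KL i j : ℚ) := by
    simp_rw [Finset.mul_sum]
    rw [Finset.sum_comm]
    exact Finset.sum_congr rfl fun i _ => Finset.sum_congr rfl fun j _ => by ring
  have h3 : ∑ i, (NL k i : ℚ) * ∑ j, c j * (KL i j : ℚ) = 0 := by
    simp [hrow]
  rw [Pi.zero_apply, ← h1, h2, h3]

lemma T_inj : Function.Injective T := by
  rw [← LinearMap.ker_eq_bot, LinearMap.ker_eq_bot']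
  intro c hc
  exact Tker c (fun i => by rw [hc, zero_mul])

/-! ### Main theorem -/

/-- Example 4.3 of the paper (`d = 4`, `c = 2`, `k = 3`): `dim (R/I₁)₈ = 1`,
`dim (I_sum/I₁)₄ = 18`, and the symmetric multiplication form
`(I_sum/I₁)₄ × (I_sum/I₁)₄ → (R/I₁)₈ ≅ ℚ` is nondegenerate. -/
theorem stmt11 :
    finrank ℚ (qpiece 8) = 1 ∧
    finrank ℚ (B 4) = 18 ∧
    ∀ a ∈ B 4, (∀ b ∈ B 4, a * b = 0) → a = 0 := by
  refine ⟨?_, ?_, ?_⟩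
  · haveI : Nontrivial (R ⧸ I₁) := ⟨mk' (mono ![2,2,2,2]), 0, mk_mu_ne⟩
    rw [qpiece8_eq]
    exact finrank_span_singleton mk_mu_ne
  · rw [B4_eq, LinearMap.finrank_range_of_inj T_inj]
    exact Module.finrank_fin_fun ℚ
  · intro a ha hab
    rw [B4_eq] at ha
    obtain ⟨c, rfl⟩ := ha
    have : c = 0 := Tker c (fun i => hab _ (mB4 i))
    rw [this, map_zero]

end Stmt11
end

section
/- Let V, W be finite-dimensional complex vector spaces with dim V = dim W = 2r − 1 (odd), and let φ₁, φ₂ : V × W → ℂ be bilinear with rank φ₁ = rank φ₂ = r, ker_L(φ₁) ∩ ker_L(φ₂) = 0, ker_R(φ₁) ∩ ker_R(φ₂) = 0, and suppose the restriction of φ₂ to ker_L(φ₁) × ker_R(φ₁) has zero left kernel (hence rank r − 1), and symmetrically the restriction of φ₁ to ker_L(φ₂) × ker_R(φ₂) has rank r − 1. Then there is at most one nonzero t ∈ ℂ with rank(φ₁ + t·φ₂) < 2r − 1. -/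
open Module

namespace Stmt17Aux
open Polynomial Matrix LinearMap

variable {V W : Type*} [AddCommGroup V] [Module ℂ V] [AddCommGroup W] [Module ℂ W]

lemma toMatrix₂_eq_transpose {ι κ : Type*} [Fintype ι] [DecidableEq ι] [Fintype κ] [DecidableEq κ]
    (b₁ : Basis ι ℂ V) (b₂ : Basis κ ℂ W) (B : V →ₗ[ℂ] W →ₗ[ℂ] ℂ) :
    LinearMap.toMatrix₂ b₁ b₂ B = (LinearMap.toMatrix b₁ b₂.dualBasis B)ᵀ := by
  ext i j
  simp [LinearMap.toMatrix_apply, Basis.dualBasis_repr]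

lemma det_ne_zero_iff_bijective {ι : Type*} [Fintype ι] [DecidableEq ι] {U : Type*}
    [AddCommGroup U] [Module ℂ U]
    (b₁ : Basis ι ℂ V) (b₂ : Basis ι ℂ U) (f : V →ₗ[ℂ] U) :
    (LinearMap.toMatrix b₁ b₂ f).det ≠ 0 ↔ Function.Bijective f := by
  constructor
  · intro h
    obtain ⟨u, hu⟩ := (Matrix.isUnit_iff_isUnit_det _).mpr (isUnit_iff_ne_zero.mpr h)
    have hf : f = Matrix.toLin b₁ b₂ (LinearMap.toMatrix b₁ b₂ f) :=
      (Matrix.toLin_toMatrix _ _ _).symm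
    have h1 : (Matrix.toLin b₂ b₁ (↑u⁻¹ : Matrix ι ι ℂ)).comp f = LinearMap.id := by
      rw [hf, ← Matrix.toLin_mul, ← hu, u.inv_mul, Matrix.toLin_one]
    have h2 : f.comp (Matrix.toLin b₂ b₁ (↑u⁻¹ : Matrix ι ι ℂ)) = LinearMap.id := by
      conv_lhs => rw [hf]
      rw [← Matrix.toLin_mul, ← hu, u.mul_inv, Matrix.toLin_one]
    constructor
    · exact Function.LeftInverse.injective (g := Matrix.toLin b₂ b₁ (↑u⁻¹ : Matrix ι ι ℂ))
        fun x => by rw [← LinearMap.comp_apply, h1, LinearMap.id_apply]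
    · exact Function.RightInverse.surjective (g := Matrix.toLin b₂ b₁ (↑u⁻¹ : Matrix ι ι ℂ))
        fun x => by rw [← LinearMap.comp_apply, h2, LinearMap.id_apply]
  · intro h
    set e := LinearEquiv.ofBijective f h
    have : LinearMap.toMatrix b₁ b₂ f * LinearMap.toMatrix b₂ b₁ (e.symm : U →ₗ[ℂ] V) = 1 := by
      rw [← LinearMap.toMatrix_comp b₂ b₁ b₂]
      have hcomp : f ∘ₗ (e.symm : U →ₗ[ℂ] V) = LinearMap.id := by
        ext x
        simp [e]
      rw [hcomp, LinearMap.toMatrix_id]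
    exact left_ne_zero_of_mul_eq_one (by rw [← Matrix.det_mul, this, Matrix.det_one])


lemma det₂_ne_zero_iff_bijective {ι : Type*} [Fintype ι] [DecidableEq ι]
    (b₁ : Basis ι ℂ V) (b₂ : Basis ι ℂ W) (B : V →ₗ[ℂ] W →ₗ[ℂ] ℂ) :
    (LinearMap.toMatrix₂ b₁ b₂ B).det ≠ 0 ↔ Function.Bijective B := by
  rw [toMatrix₂_eq_transpose, Matrix.det_transpose]
  exact det_ne_zero_iff_bijective b₁ b₂.dualBasis B

lemma bijective_of_surjective_pairing [FiniteDimensional ℂ V] [FiniteDimensional ℂ W]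
    (h : finrank ℂ V = finrank ℂ W) (B : V →ₗ[ℂ] W →ₗ[ℂ] ℂ)
    (hs : Function.Surjective B) : Function.Bijective B :=
  ⟨(LinearMap.injective_iff_surjective_of_finrank_eq_finrank
      (by rw [h, Subspace.dual_finrank_eq])).mpr hs, hs⟩

lemma bijective_of_injective_pairing [FiniteDimensional ℂ V] [FiniteDimensional ℂ W]
    (h : finrank ℂ V = finrank ℂ W) (B : V →ₗ[ℂ] W →ₗ[ℂ] ℂ)
    (hi : Function.Injective B) : Function.Bijective B :=
  ⟨hi, (LinearMap.injective_iff_surjective_of_finrank_eq_finrank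
      (by rw [h, Subspace.dual_finrank_eq])).mp hi⟩

lemma bijective_of_finrank_range_pairing [FiniteDimensional ℂ V] [FiniteDimensional ℂ W]
    (h : finrank ℂ V = finrank ℂ W) (B : V →ₗ[ℂ] W →ₗ[ℂ] ℂ)
    (hr : finrank ℂ (LinearMap.range B) = finrank ℂ V) : Function.Bijective B := by
  apply bijective_of_surjective_pairing h B
  rw [← LinearMap.range_eq_top]
  apply Submodule.eq_top_of_finrank_eq
  rw [hr, Subspace.dual_finrank_eq, h]

lemma finrank_range_lt_iff_det₂_eq_zero {ι : Type*} [Fintype ι] [DecidableEq ι]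
    [FiniteDimensional ℂ V] [FiniteDimensional ℂ W]
    (b₁ : Basis ι ℂ V) (b₂ : Basis ι ℂ W) (B : V →ₗ[ℂ] W →ₗ[ℂ] ℂ)
    (h : finrank ℂ V = finrank ℂ W) :
    finrank ℂ (LinearMap.range B) < finrank ℂ W ↔
      (LinearMap.toMatrix₂ b₁ b₂ B).det = 0 := by
  rw [← not_iff_not, not_lt, ← ne_eq, det₂_ne_zero_iff_bijective]
  constructor
  · intro hle
    apply bijective_of_finrank_range_pairing h B
    have h1 : finrank ℂ (LinearMap.range B) ≤ finrank ℂ (Module.Dual ℂ W) :=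
      Submodule.finrank_le _
    rw [Subspace.dual_finrank_eq] at h1
    omega
  · intro hb
    have : LinearMap.range B = ⊤ := LinearMap.range_eq_top.mpr hb.2
    rw [this, finrank_top, Subspace.dual_finrank_eq]


lemma rank_toMatrix₂ {ι κ : Type*} [Fintype ι] [DecidableEq ι] [Fintype κ] [DecidableEq κ]
    (b₁ : Basis ι ℂ V) (b₂ : Basis κ ℂ W) (B : V →ₗ[ℂ] W →ₗ[ℂ] ℂ) :
    (LinearMap.toMatrix₂ b₁ b₂ B).rank = finrank ℂ (LinearMap.range B) := by
  rw [toMatrix₂_eq_transpose, Matrix.rank_transpose,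
    Matrix.rank_eq_finrank_range_toLin _ b₂.dualBasis b₁, Matrix.toLin_toMatrix]

lemma toMatrix₂_flip {ι κ : Type*} [Fintype ι] [DecidableEq ι] [Fintype κ] [DecidableEq κ]
    (b₁ : Basis ι ℂ V) (b₂ : Basis κ ℂ W) (B : V →ₗ[ℂ] W →ₗ[ℂ] ℂ) :
    LinearMap.toMatrix₂ b₂ b₁ B.flip = (LinearMap.toMatrix₂ b₁ b₂ B)ᵀ := by
  ext i j
  simp

lemma finrank_range_flip [FiniteDimensional ℂ V] [FiniteDimensional ℂ W]
    (B : V →ₗ[ℂ] W →ₗ[ℂ] ℂ) :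
    finrank ℂ (LinearMap.range B.flip) = finrank ℂ (LinearMap.range B) := by
  classical
  let b₁ := Module.finBasis ℂ V
  let b₂ := Module.finBasis ℂ W
  rw [← rank_toMatrix₂ b₂ b₁ B.flip, ← rank_toMatrix₂ b₁ b₂ B, toMatrix₂_flip,
    Matrix.rank_transpose]

lemma natDegree_det_le {m : Type*} [Fintype m] [DecidableEq m]
    (M : Matrix m m (Polynomial ℂ)) (d : m → ℕ)
    (h : ∀ i j, (M i j).natDegree ≤ d i) :
    M.det.natDegree ≤ ∑ i, d i := by
  rw [Matrix.det_apply]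
  apply Polynomial.natDegree_sum_le_of_forall_le
  intro σ _
  have h1 : (∏ i, M (σ i) i).natDegree ≤ ∑ i, d (σ i) :=
    le_trans (Polynomial.natDegree_prod_le _ _)
      (Finset.sum_le_sum fun i _ => h (σ i) i)
  have h2 : ∑ i, d (σ i) = ∑ i, d i := Equiv.sum_comp σ d
  have h3 : (Equiv.Perm.sign σ • ∏ i, M (σ i) i)
      = (((Equiv.Perm.sign σ : ℤ) : ℂ[X])) * ∏ i, M (σ i) i := by
    rw [Units.smul_def, zsmul_eq_mul]
  rw [h3, ← h2]
  refine le_trans (Polynomial.natDegree_mul_le) ?_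
  simpa using h1


set_option maxHeartbeats 1000000 in
lemma core {V W : Type*} [AddCommGroup V] [Module ℂ V] [FiniteDimensional ℂ V]
    [AddCommGroup W] [Module ℂ W] [FiniteDimensional ℂ W]
    (r : ℕ) (hr : 1 ≤ r)
    (hdV : finrank ℂ V = 2 * r - 1) (hdW : finrank ℂ W = 2 * r - 1)
    (φ ψ : V →ₗ[ℂ] W →ₗ[ℂ] ℂ)
    (hrφ : finrank ℂ (LinearMap.range φ) = r)
    (hres : finrank ℂ (LinearMap.range
      (LinearMap.domRestrict₁₂ ψ (LinearMap.ker φ) (LinearMap.ker φ.flip))) = r - 1)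
    {ι : Type*} [Fintype ι] [DecidableEq ι] (e₀ : Basis ι ℂ V) (f₀ : Basis ι ℂ W) :
    ∃ q : ℂ[X], q.natDegree ≤ r ∧ q.eval 0 ≠ 0 ∧
      ∀ t : ℂ, (LinearMap.toMatrix₂ e₀ f₀ (φ + t • ψ)).det = t ^ (r - 1) * q.eval t := by
  classical
  set K₁ := LinearMap.ker φ with hK₁def
  set K₂ := LinearMap.ker φ.flip with hK₂def
  have hK₁ : finrank ℂ K₁ = r - 1 := by
    have h := LinearMap.finrank_range_add_finrank_ker φ
    rw [← hK₁def] at h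
    omega
  have hflip : finrank ℂ (LinearMap.range φ.flip) = r := by
    rw [finrank_range_flip]; exact hrφ
  have hK₂ : finrank ℂ K₂ = r - 1 := by
    have h := LinearMap.finrank_range_add_finrank_ker φ.flip
    rw [← hK₂def] at h
    omega
  obtain ⟨C₁, hC₁⟩ := Submodule.exists_isCompl K₁
  obtain ⟨C₂, hC₂⟩ := Submodule.exists_isCompl K₂
  have hC₁r : finrank ℂ C₁ = r := by
    have := Submodule.finrank_add_eq_of_isCompl hC₁
    omega
  have hC₂r : finrank ℂ C₂ = r := by
    have := Submodule.finrank_add_eq_of_isCompl hC₂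
    omega
  let bK₁ : Basis (Fin (r - 1)) ℂ K₁ := Module.finBasisOfFinrankEq ℂ K₁ hK₁
  let bK₂ : Basis (Fin (r - 1)) ℂ K₂ := Module.finBasisOfFinrankEq ℂ K₂ hK₂
  let bC₁ : Basis (Fin r) ℂ C₁ := Module.finBasisOfFinrankEq ℂ C₁ hC₁r
  let bC₂ : Basis (Fin r) ℂ C₂ := Module.finBasisOfFinrankEq ℂ C₂ hC₂r
  let e : Basis (Fin (r - 1) ⊕ Fin r) ℂ V :=
    (bK₁.prod bC₁).map (Submodule.prodEquivOfIsCompl K₁ C₁ hC₁)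
  let f : Basis (Fin (r - 1) ⊕ Fin r) ℂ W :=
    (bK₂.prod bC₂).map (Submodule.prodEquivOfIsCompl K₂ C₂ hC₂)
  have he_inl : ∀ i, e (Sum.inl i) = (bK₁ i : V) := by
    intro i
    simp [e, Basis.map_apply, Basis.prod_apply, Submodule.coe_prodEquivOfIsCompl']
  have he_inr : ∀ i, e (Sum.inr i) = (bC₁ i : V) := by
    intro i
    simp [e, Basis.map_apply, Basis.prod_apply, Submodule.coe_prodEquivOfIsCompl']
  have hf_inl : ∀ i, f (Sum.inl i) = (bK₂ i : W) := by
    intro i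
    simp [f, Basis.map_apply, Basis.prod_apply, Submodule.coe_prodEquivOfIsCompl']
  have hf_inr : ∀ i, f (Sum.inr i) = (bC₂ i : W) := by
    intro i
    simp [f, Basis.map_apply, Basis.prod_apply, Submodule.coe_prodEquivOfIsCompl']
  have hφl : ∀ (i) (w : W), φ (bK₁ i : V) w = 0 := by
    intro i w
    have h : φ (bK₁ i : V) = 0 :=
      LinearMap.mem_ker.mp ((bK₁ i).2 : (bK₁ i : V) ∈ LinearMap.ker φ)
    rw [h, LinearMap.zero_apply]
  have hφr : ∀ (v : V) (j), φ v (bK₂ j : W) = 0 := by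
    intro v j
    have h : φ.flip (bK₂ j : W) = 0 :=
      LinearMap.mem_ker.mp ((bK₂ j).2 : (bK₂ j : W) ∈ LinearMap.ker φ.flip)
    rw [← LinearMap.flip_apply, h, LinearMap.zero_apply]
  set A : Matrix (Fin r) (Fin r) ℂ := fun i j => φ (bC₁ i : V) (bC₂ j : W) with hAdef
  set Bm : Matrix (Fin (r - 1)) (Fin (r - 1)) ℂ :=
    fun i j => ψ (bK₁ i : V) (bK₂ j : W) with hBmdef
  set Xm : Matrix (Fin (r - 1)) (Fin r) ℂ := fun i j => ψ (bK₁ i : V) (bC₂ j : W) with hXmdef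
  set Ym : Matrix (Fin r) (Fin (r - 1)) ℂ := fun i j => ψ (bC₁ i : V) (bK₂ j : W) with hYmdef
  set Zm : Matrix (Fin r) (Fin r) ℂ := fun i j => ψ (bC₁ i : V) (bC₂ j : W) with hZmdef
  have hM : ∀ t : ℂ, LinearMap.toMatrix₂ e f (φ + t • ψ)
      = Matrix.fromBlocks (t • Bm) (t • Xm) (t • Ym) (A + t • Zm) := by
    intro t
    ext i j
    rcases i with i | i <;> rcases j with j | j <;>
      simp [Matrix.fromBlocks, he_inl, he_inr, hf_inl, hf_inr, hφl, hφr,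
        hAdef, hBmdef, hXmdef, hYmdef, hZmdef] <;> rfl
  have hB : Bm.det ≠ 0 := by
    have hBm : Bm = LinearMap.toMatrix₂ bK₁ bK₂ (ψ.domRestrict₁₂ K₁ K₂) := by
      ext i j
      simp [hBmdef, LinearMap.domRestrict₁₂_apply]
    rw [hBm]
    exact (det₂_ne_zero_iff_bijective bK₁ bK₂ _).mpr
      (bijective_of_finrank_range_pairing (by rw [hK₁, hK₂]) _ (by rw [hres, hK₁]))
  have hA : A.det ≠ 0 := by
    have hAe : A = LinearMap.toMatrix₂ bC₁ bC₂ (φ.domRestrict₁₂ C₁ C₂) := by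
      ext i j
      simp [hAdef, LinearMap.domRestrict₁₂_apply]
    rw [hAe]
    apply (det₂_ne_zero_iff_bijective bC₁ bC₂ _).mpr
    apply bijective_of_injective_pairing (by rw [hC₁r, hC₂r])
    rw [← LinearMap.ker_eq_bot]
    rw [Submodule.eq_bot_iff]
    intro x hx
    rw [LinearMap.mem_ker] at hx
    have hx0 : φ (x : V) = 0 := by
      ext w
      have hw : w ∈ K₂ ⊔ C₂ := by rw [hC₂.sup_eq_top]; trivial
      obtain ⟨y, hy, z, hz, rfl⟩ := Submodule.mem_sup.mp hw
      have h1 : φ (x : V) y = 0 := by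
        have hy' : φ.flip y = 0 := LinearMap.mem_ker.mp (hy : y ∈ LinearMap.ker φ.flip)
        rw [← LinearMap.flip_apply, hy', LinearMap.zero_apply]
      have h2 : φ (x : V) z = 0 := by
        have := congrFun (congrArg (fun g => g.toFun) hx) ⟨z, hz⟩
        simpa [LinearMap.domRestrict₁₂_apply] using this
      simp [h1, h2]
    have hxK : (x : V) ∈ K₁ := LinearMap.mem_ker.mpr hx0
    have := Submodule.disjoint_def.mp hC₁.disjoint.symm (x : V) x.2 hxK
    exact Subtype.ext this
  set q₀ : ℂ[X] := (Matrix.fromBlocks (Bm.map Polynomial.C) (Xm.map Polynomial.C)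
      ((Polynomial.X : ℂ[X]) • Ym.map Polynomial.C)
      (A.map Polynomial.C + (Polynomial.X : ℂ[X]) • Zm.map Polynomial.C)).det with hq₀def
  have heval : ∀ t : ℂ, q₀.eval t = (Matrix.fromBlocks Bm Xm (t • Ym) (A + t • Zm)).det := by
    intro t
    have h := RingHom.map_det (Polynomial.evalRingHom t)
      (Matrix.fromBlocks (Bm.map Polynomial.C) (Xm.map Polynomial.C)
        ((Polynomial.X : ℂ[X]) • Ym.map Polynomial.C)
        (A.map Polynomial.C + (Polynomial.X : ℂ[X]) • Zm.map Polynomial.C))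
    rw [hq₀def]
    show (Polynomial.evalRingHom t) _ = _
    rw [h]
    congr 1
    ext i j
    rcases i with i | i <;> rcases j with j | j <;>
      simp [Matrix.fromBlocks, RingHom.mapMatrix_apply, Matrix.map_apply, Matrix.smul_apply,
        smul_eq_mul] <;> ring
  have hq0 : q₀.eval 0 = Bm.det * A.det := by
    rw [heval 0]
    have : Matrix.fromBlocks Bm Xm ((0:ℂ) • Ym) (A + (0:ℂ) • Zm) = Matrix.fromBlocks Bm Xm 0 A := by
      rw [zero_smul, zero_smul, add_zero]
    rw [this, Matrix.det_fromBlocks_zero₂₁]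
  have hdeg : q₀.natDegree ≤ r := by
    have hb : ∀ (i j : Fin (r - 1) ⊕ Fin r),
        ((Matrix.fromBlocks (Bm.map Polynomial.C) (Xm.map Polynomial.C)
          ((Polynomial.X : ℂ[X]) • Ym.map Polynomial.C)
          (A.map Polynomial.C + (Polynomial.X : ℂ[X]) • Zm.map Polynomial.C)) i j).natDegree
          ≤ Sum.elim (fun _ => 0) (fun _ => 1) i := by
      rintro (i | i) (j | j)
      · simp [Matrix.fromBlocks]
      · simp [Matrix.fromBlocks]
      · simp only [Matrix.fromBlocks, Matrix.of_apply, Sum.elim_inl, Sum.elim_inr,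
          Matrix.smul_apply, Matrix.map_apply, smul_eq_mul]
        refine le_trans (Polynomial.natDegree_mul_le) ?_
        simp
      · simp only [Matrix.fromBlocks, Matrix.of_apply, Sum.elim_inl, Sum.elim_inr,
          Matrix.add_apply, Matrix.smul_apply, Matrix.map_apply, smul_eq_mul]
        refine le_trans (Polynomial.natDegree_add_le _ _) ?_
        simp only [Polynomial.natDegree_C, max_le_iff]
        refine ⟨Nat.zero_le _, le_trans (Polynomial.natDegree_mul_le) (by simp)⟩
    refine le_trans (natDegree_det_le _ _ hb) ?_
    simp
  have hdetef : ∀ t : ℂ, (LinearMap.toMatrix₂ e f (φ + t • ψ)).det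
      = t ^ (r - 1) * q₀.eval t := by
    intro t
    rw [hM t, heval t]
    have hfac : Matrix.fromBlocks (t • Bm) (t • Xm) (t • Ym) (A + t • Zm)
        = Matrix.fromBlocks (t • (1 : Matrix (Fin (r - 1)) (Fin (r - 1)) ℂ)) 0 0
            (1 : Matrix (Fin r) (Fin r) ℂ)
          * Matrix.fromBlocks Bm Xm (t • Ym) (A + t • Zm) := by
      rw [Matrix.fromBlocks_multiply]
      congr 1 <;> simp [Matrix.smul_mul]
    rw [hfac, Matrix.det_mul, Matrix.det_fromBlocks_zero₂₁, Matrix.det_smul]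
    simp
  -- transport to the bases e₀ f₀
  have hcard : Fintype.card ι = 2 * r - 1 := by
    rw [← Module.finrank_eq_card_basis e₀, hdV]
  have hcardSum : Fintype.card (Fin (r - 1) ⊕ Fin r) = Fintype.card ι := by
    simp [hcard]
    omega
  let σ : (Fin (r - 1) ⊕ Fin r) ≃ ι := Fintype.equivOfCardEq hcardSum
  let e' : Basis ι ℂ V := e.reindex σ
  let f' : Basis ι ℂ W := f.reindex σ
  have hsub : ∀ ρ : V →ₗ[ℂ] W →ₗ[ℂ] ℂ, LinearMap.toMatrix₂ e' f' ρ
      = (LinearMap.toMatrix₂ e f ρ).submatrix σ.symm σ.symm := by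
    intro ρ
    ext i j
    simp [e', f', Basis.reindex_apply, Matrix.submatrix_apply]
  have hdet' : ∀ t : ℂ, (LinearMap.toMatrix₂ e' f' (φ + t • ψ)).det
      = t ^ (r - 1) * q₀.eval t := by
    intro t
    rw [hsub, Matrix.det_submatrix_equiv_self, hdetef]
  set c₁ : ℂ := (e'.toMatrix e₀).det with hc₁def
  set c₂ : ℂ := (f'.toMatrix f₀).det with hc₂def
  have hc₁ : c₁ ≠ 0 := by
    have h := Basis.toMatrix_mul_toMatrix_flip e' e₀
    have := congrArg Matrix.det h
    rw [Matrix.det_mul, Matrix.det_one] at this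
    exact left_ne_zero_of_mul_eq_one this
  have hc₂ : c₂ ≠ 0 := by
    have h := Basis.toMatrix_mul_toMatrix_flip f' f₀
    have := congrArg Matrix.det h
    rw [Matrix.det_mul, Matrix.det_one] at this
    exact left_ne_zero_of_mul_eq_one this
  refine ⟨(c₁ * c₂) • q₀, ?_, ?_, ?_⟩
  · exact le_trans (Polynomial.natDegree_smul_le _ _) hdeg
  · rw [Polynomial.eval_smul, hq0, smul_eq_mul]
    exact mul_ne_zero (mul_ne_zero hc₁ hc₂) (mul_ne_zero hB hA)
  · intro t
    have hbc := LinearMap.toMatrix₂_mul_basis_toMatrix e' f' e₀ f₀ (φ + t • ψ)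
    rw [← hbc, Matrix.det_mul, Matrix.det_mul, Matrix.det_transpose, hdet' t,
      Polynomial.eval_smul]
    rw [← hc₁def, ← hc₂def]
    simp only [smul_eq_mul]
    ring
end Stmt17Aux

open Polynomial Matrix LinearMap in
set_option maxHeartbeats 1000000 in
/-- Remark 2.5 of the paper: if `dim V = dim W = 2r - 1`, `rank φ₁ = rank φ₂ = r`,
the kernels intersect trivially, and both restricted pairings have maximal rank `r - 1`
(the restriction of `φ₂` to `ker_L φ₁ × ker_R φ₁` having zero left kernel), then there
is at most one nonzero `t ∈ ℂ` with `rank (φ₁ + t • φ₂) < 2r - 1`. -/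
theorem stmt17 {V W : Type} [AddCommGroup V] [Module ℂ V] [FiniteDimensional ℂ V]
    [AddCommGroup W] [Module ℂ W] [FiniteDimensional ℂ W]
    (r : ℕ) (hr : 1 ≤ r)
    (hdV : finrank ℂ V = 2 * r - 1) (hdW : finrank ℂ W = 2 * r - 1)
    (φ₁ φ₂ : V →ₗ[ℂ] W →ₗ[ℂ] ℂ)
    (hr₁ : finrank ℂ (LinearMap.range φ₁) = r)
    (hr₂ : finrank ℂ (LinearMap.range φ₂) = r)
    (hV : LinearMap.ker φ₁ ⊓ LinearMap.ker φ₂ = ⊥)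
    (hW : LinearMap.ker φ₁.flip ⊓ LinearMap.ker φ₂.flip = ⊥)
    (hs₁ : LinearMap.ker
      (LinearMap.domRestrict₁₂ φ₂ (LinearMap.ker φ₁) (LinearMap.ker φ₁.flip)) = ⊥)
    (hs₁' : finrank ℂ (LinearMap.range
      (LinearMap.domRestrict₁₂ φ₂ (LinearMap.ker φ₁) (LinearMap.ker φ₁.flip))) = r - 1)
    (hs₂ : finrank ℂ (LinearMap.range
      (LinearMap.domRestrict₁₂ φ₁ (LinearMap.ker φ₂) (LinearMap.ker φ₂.flip))) = r - 1) :
    {t : ℂ | t ≠ 0 ∧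
      finrank ℂ (LinearMap.range (φ₁ + t • φ₂)) < 2 * r - 1}.Subsingleton := by
  classical
  let e₀ : Basis (Fin (2 * r - 1)) ℂ V := Module.finBasisOfFinrankEq ℂ V hdV
  let f₀ : Basis (Fin (2 * r - 1)) ℂ W := Module.finBasisOfFinrankEq ℂ W hdW
  obtain ⟨q₁, hq₁deg, hq₁0, hq₁⟩ := Stmt17Aux.core r hr hdV hdW φ₁ φ₂ hr₁ hs₁' e₀ f₀
  obtain ⟨q₂, hq₂deg, hq₂0, hq₂⟩ := Stmt17Aux.core r hr hdV hdW φ₂ φ₁ hr₂ hs₂ e₀ f₀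
  have hsplit : 2 * r - 1 = r + (r - 1) := by omega
  have key : Polynomial.X ^ (r - 1) * q₁ = Polynomial.reflect r q₂ := by
    apply Polynomial.eq_of_infinite_eval_eq
    have hinf : ({(0 : ℂ)}ᶜ : Set ℂ).Infinite :=
      Set.Finite.infinite_compl (Set.finite_singleton 0)
    refine hinf.mono ?_
    intro t ht
    simp only [Set.mem_compl_iff, Set.mem_singleton_iff] at ht
    show Polynomial.eval t _ = Polynomial.eval t _
    have ht' : t⁻¹ ≠ 0 := inv_ne_zero ht
    have hpen : (φ₁ + t • φ₂) = t • (φ₂ + t⁻¹ • φ₁) := by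
      rw [smul_add, smul_smul, mul_inv_cancel₀ ht, one_smul, add_comm]
    have h2 : (LinearMap.toMatrix₂ e₀ f₀ (φ₁ + t • φ₂)).det
        = t ^ (2 * r - 1) * (LinearMap.toMatrix₂ e₀ f₀ (φ₂ + t⁻¹ • φ₁)).det := by
      rw [hpen, _root_.map_smul, Matrix.det_smul, Fintype.card_fin]
    have hrefl : (Polynomial.reflect r q₂).eval t = t ^ r * q₂.eval t⁻¹ := by
      haveI := invertibleOfNonzero ht'
      have h5 := Polynomial.eval₂_reflect_mul_pow (RingHom.id ℂ) t⁻¹ r q₂ hq₂deg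
      rw [invOf_eq_inv, inv_inv] at h5
      have h6 : (Polynomial.reflect r q₂).eval t * (t⁻¹) ^ r = q₂.eval t⁻¹ := h5
      have h7 := congrArg (fun x => x * t ^ r) h6
      simp only [mul_assoc, ← mul_pow, inv_mul_cancel₀ ht, one_pow, mul_one] at h7
      rw [h7]
      ring
    calc Polynomial.eval t (Polynomial.X ^ (r - 1) * q₁)
        = t ^ (r - 1) * q₁.eval t := by simp
      _ = (LinearMap.toMatrix₂ e₀ f₀ (φ₁ + t • φ₂)).det := (hq₁ t).symm
      _ = t ^ (2 * r - 1) * (LinearMap.toMatrix₂ e₀ f₀ (φ₂ + t⁻¹ • φ₁)).det := h2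
      _ = t ^ (2 * r - 1) * ((t⁻¹) ^ (r - 1) * q₂.eval t⁻¹) := by rw [hq₂ t⁻¹]
      _ = t ^ r * q₂.eval t⁻¹ := by
          rw [hsplit, pow_add, inv_pow]
          field_simp
      _ = (Polynomial.reflect r q₂).eval t := hrefl.symm
  have hq₁ne : q₁ ≠ 0 := fun h => hq₁0 (by rw [h]; simp)
  have hdeg1 : (r - 1) + q₁.natDegree ≤ r := by
    have h7 : (Polynomial.X ^ (r - 1) * q₁).natDegree = (r - 1) + q₁.natDegree := by
      rw [Polynomial.natDegree_mul (pow_ne_zero _ Polynomial.X_ne_zero) hq₁ne,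
        Polynomial.natDegree_X_pow]
    have h8 : (Polynomial.reflect r q₂).natDegree ≤ r := by
      rw [Polynomial.natDegree_le_iff_coeff_eq_zero]
      intro N hN
      rw [Polynomial.coeff_reflect, Polynomial.revAt_eq_self_of_lt hN]
      exact Polynomial.coeff_eq_zero_of_natDegree_lt (lt_of_le_of_lt hq₂deg hN)
    rw [← h7, key]
    exact h8
  have hbad : ∀ t : ℂ, t ≠ 0 →
      (finrank ℂ (LinearMap.range (φ₁ + t • φ₂)) < 2 * r - 1 ↔ q₁.eval t = 0) := by
    intro t ht
    rw [← hdW, Stmt17Aux.finrank_range_lt_iff_det₂_eq_zero e₀ f₀ _ (by rw [hdV, hdW]), hq₁ t]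
    constructor
    · intro h
      rcases mul_eq_zero.mp h with h | h
      · exact absurd h (pow_ne_zero _ ht)
      · exact h
    · intro h
      rw [h, mul_zero]
  intro x hx y hy
  by_contra hxy
  obtain ⟨hx0, hxlt⟩ := hx
  obtain ⟨hy0, hylt⟩ := hy
  have hqx : q₁.eval x = 0 := (hbad x hx0).mp hxlt
  have hqy : q₁.eval y = 0 := (hbad y hy0).mp hylt
  have hxm : x ∈ q₁.roots.toFinset := by
    simp [Polynomial.mem_roots', hq₁ne, Polynomial.IsRoot, hqx]
  have hym : y ∈ q₁.roots.toFinset := by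
    simp [Polynomial.mem_roots', hq₁ne, Polynomial.IsRoot, hqy]
  have h2le : 2 ≤ q₁.roots.toFinset.card :=
    Finset.one_lt_card.mpr ⟨x, hxm, y, hym, hxy⟩
  have h3 := Multiset.toFinset_card_le q₁.roots
  have h4 := Polynomial.card_roots' q₁
  omega
end
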